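/- arXiv:2402.07703 — 3 statements merged into one kernel-verified Lean document; each statement's English description precedes it below -/
import Mathlib

section
/- (Theorem 4) Under the DMD-RSC scheme with learning rates η_t = 1/(γ Σ_{τ=1}^t |F_τ|) and approximation error ρ_t = η_t³/(2σ), for every x* ∈ X the regret satisfies Reg_T := Σ_{t=1}^T f_t(x_t) − Σ_{t=1}^T f_t(x*) ≤ (3dG⋆² + 8ξRG⋆)(1 + ln T)/(2σγ) + 6dG⋆/(σγ²) + 2dξG⋆²/(σ²γ²), where d := max_{1≤t≤T} d_t. -/
open Finset


/-- First-order optimality condition for a minimizer over a convex set. -/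
lemma foc_convex {E : Type*} [NormedAddCommGroup E] [NormedSpace ℝ E]
    {X : Set E} (hX : Convex ℝ X) {φ : E → ℝ} {L : E →L[ℝ] ℝ} {y u : E}
    (hy : y ∈ X) (hu : u ∈ X) (hmin : IsMinOn φ X y)
    (hder : HasFDerivAt φ L y) : 0 ≤ L (u - y) := by
  set δ := u - y with hδ
  have hcomp : HasDerivAt (fun s : ℝ => φ (y + s • δ)) (L δ) 0 := by
    have h1 : HasDerivAt (fun s : ℝ => y + s • δ) δ 0 := by
      simpa using ((hasDerivAt_id (0:ℝ)).smul_const δ).const_add y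
    have h2 : HasFDerivAt φ L (y + (0:ℝ) • δ) := by simpa using hder
    exact h2.comp_hasDerivAt (x := (0:ℝ)) h1
  have hmem : ∀ s : ℝ, s ∈ Set.Icc (0:ℝ) 1 → y + s • δ ∈ X := by
    intro s hs
    have h := hX hy hu (by linarith [hs.1, hs.2] : (0:ℝ) ≤ 1 - s) hs.1 (by linarith [hs.1, hs.2])
    have heq : y + s • δ = (1 - s) • y + s • u := by rw [hδ]; module
    rw [heq]; exact h
  have hIoi : Set.Ioi (0:ℝ) \ {0} = Set.Ioi 0 := by
    ext z
    constructor
    · exact fun h => h.1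
    · exact fun h => ⟨h, ne_of_gt h⟩
  have htend : Filter.Tendsto (slope (fun s : ℝ => φ (y + s • δ)) 0)
      (nhdsWithin (0:ℝ) (Set.Ioi 0 \ {0})) (nhds (L δ)) := by
    rw [← hasDerivWithinAt_iff_tendsto_slope]
    exact (hcomp.hasDerivWithinAt (s := Set.Ioi 0))
  have hslope : ∀ᶠ s in nhdsWithin (0:ℝ) (Set.Ioi 0 \ {0}),
      0 ≤ slope (fun s : ℝ => φ (y + s • δ)) 0 s := by
    have h01 : Set.Ioc (0:ℝ) 1 ∈ nhdsWithin (0:ℝ) (Set.Ioi 0 \ {0}) := by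
      rw [hIoi]; exact Ioc_mem_nhdsGT_of_mem (by norm_num)
    filter_upwards [h01] with s hs
    have h1 : φ (y + (0:ℝ) • δ) ≤ φ (y + s • δ) := by
      have := hmin (hmem s ⟨le_of_lt hs.1, hs.2⟩)
      simpa using this
    rw [slope_def_field]
    apply div_nonneg _ (by simpa using le_of_lt hs.1)
    simpa using sub_nonneg.2 h1
  have hne : (nhdsWithin (0:ℝ) (Set.Ioi 0 \ {0})).NeBot := by
    rw [hIoi]; infer_instance
  exact ge_of_tendsto htend hslope


lemma Spos (n : ℕ → ℕ) (hn1 : 1 ≤ n 1) {t : ℕ} (ht : 1 ≤ t) :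
    (1:ℝ) ≤ ∑ τ ∈ Icc 1 t, (n τ : ℝ) := by
  have h1 : (1:ℝ) ≤ (n 1 : ℝ) := by exact_mod_cast hn1
  calc (1:ℝ) ≤ (n 1 : ℝ) := h1
    _ = ∑ τ ∈ Icc 1 1, (n τ : ℝ) := by simp
    _ ≤ ∑ τ ∈ Icc 1 t, (n τ : ℝ) := by
        apply Finset.sum_le_sum_of_subset_of_nonneg
        · exact Finset.Icc_subset_Icc_right ht
        · intros; positivity

lemma harmonic_log (n : ℕ → ℕ) (hn1 : 1 ≤ n 1) (T : ℕ) (hT : 1 ≤ T) :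
    ∑ t ∈ Icc 1 T, (n t : ℝ) / (∑ τ ∈ Icc 1 t, (n τ : ℝ))
      ≤ 1 + Real.log (∑ τ ∈ Icc 1 T, (n τ : ℝ)) := by
  induction T, hT using Nat.le_induction with
  | base =>
    simp only [Finset.Icc_self, Finset.sum_singleton]
    have h1 : (0:ℝ) < (n 1 : ℝ) := by exact_mod_cast hn1
    rw [div_self (ne_of_gt h1)]
    have h2 : (1:ℝ) ≤ (n 1 : ℝ) := by exact_mod_cast hn1
    have := Real.log_nonneg h2
    linarith
  | succ T hT ih =>
    rw [Finset.sum_Icc_succ_top (by omega), Finset.sum_Icc_succ_top (by omega)]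
    set S := ∑ τ ∈ Icc 1 T, (n τ : ℝ) with hS
    have hS1 : (1:ℝ) ≤ S := Spos n hn1 hT
    have hS0 : (0:ℝ) < S := by linarith
    have hnn : (0:ℝ) ≤ (n (T+1) : ℝ) := by positivity
    set S' := S + (n (T+1) : ℝ) with hS'
    have hS'0 : (0:ℝ) < S' := by linarith
    have key : (n (T+1) : ℝ) / S' ≤ Real.log S' - Real.log S := by
      have h := Real.log_le_sub_one_of_pos (x := S / S') (by positivity)
      rw [Real.log_div (ne_of_gt hS0) (ne_of_gt hS'0)] at h
      have h2 : S / S' - 1 = -((n (T+1) : ℝ) / S') := by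
        field_simp
        rw [hS']; ring
      rw [h2] at h
      linarith
    have := ih
    linarith
lemma harmonic_sq (n : ℕ → ℕ) (hn1 : 1 ≤ n 1) (T : ℕ) (hT : 1 ≤ T) :
    ∑ t ∈ Icc 1 T, (n t : ℝ) / (∑ τ ∈ Icc 1 t, (n τ : ℝ))^2 ≤ 2 := by
  have main : ∑ t ∈ Icc 1 T, (n t : ℝ) / (∑ τ ∈ Icc 1 t, (n τ : ℝ))^2
      ≤ 2 - 1 / (∑ τ ∈ Icc 1 T, (n τ : ℝ)) := by
    induction T, hT using Nat.le_induction with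
    | base =>
      simp only [Finset.Icc_self, Finset.sum_singleton]
      have h1 : (1:ℝ) ≤ (n 1 : ℝ) := by exact_mod_cast hn1
      have h0 : (0:ℝ) < (n 1 : ℝ) := by linarith
      rw [sq]
      rw [div_mul_eq_div_div, div_self (ne_of_gt h0)]
      have : 1 / (n 1 : ℝ) ≤ 1 := by
        rw [div_le_one h0]; exact h1
      linarith
    | succ T hT ih =>
      rw [Finset.sum_Icc_succ_top (by omega), Finset.sum_Icc_succ_top (by omega)]
      set S := ∑ τ ∈ Icc 1 T, (n τ : ℝ) with hS
      have hS1 : (1:ℝ) ≤ S := Spos n hn1 hT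
      have hS0 : (0:ℝ) < S := by linarith
      have hnn : (0:ℝ) ≤ (n (T+1) : ℝ) := by positivity
      set S' := S + (n (T+1) : ℝ) with hS'
      have hS'1 : (1:ℝ) ≤ S' := by linarith
      have hS'0 : (0:ℝ) < S' := by linarith
      have key : (n (T+1) : ℝ) / S'^2 ≤ 1/S - 1/S' := by
        rw [div_sub_div _ _ (ne_of_gt hS0) (ne_of_gt hS'0)]
        rw [div_le_div_iff₀ (by positivity) (by positivity)]
        have hle : S ≤ S' := by linarith
        have hd : 1 * S' - S * 1 = (n (T+1) : ℝ) := by rw [hS']; ring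
        rw [hd, sq]
        have h3 : (n (T+1) : ℝ) * (S * S') ≤ (n (T+1) : ℝ) * (S' * S') := by
          apply mul_le_mul_of_nonneg_left _ hnn
          exact mul_le_mul_of_nonneg_right hle (le_of_lt hS'0)
        linarith
      linarith
  have hS1 : (1:ℝ) ≤ ∑ τ ∈ Icc 1 T, (n τ : ℝ) := Spos n hn1 hT
  have : (0:ℝ) < ∑ τ ∈ Icc 1 T, (n τ : ℝ) := by linarith
  have : 0 ≤ 1 / (∑ τ ∈ Icc 1 T, (n τ : ℝ)) := by positivity
  linarith

lemma norm_tel {E : Type*} [NormedAddCommGroup E] (x : ℕ → E) (k : ℕ) :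
    ∀ m, ‖x k - x (k + m)‖ ≤ ∑ s ∈ Finset.Ico k (k + m), ‖x (s+1) - x s‖ := by
  intro m
  induction m with
  | zero => simp
  | succ m ih =>
    rw [show k + (m+1) = (k+m)+1 from rfl, Finset.sum_Ico_succ_top (Nat.le_add_right k m)]
    have h1 : ‖x k - x (k+m+1)‖ ≤ ‖x k - x (k+m)‖ + ‖x (k+m) - x (k+m+1)‖ := by
      have := dist_triangle (x k) (x (k+m)) (x (k+m+1))
      simpa [dist_eq_norm] using this
    have h2 : ‖x (k+m) - x (k+m+1)‖ = ‖x ((k+m)+1) - x (k+m)‖ := by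
      rw [norm_sub_rev]
    linarith

lemma tel_sum (b : ℕ → ℝ) (T : ℕ) : ∑ t ∈ Icc 1 T, (b (t-1) - b t) = b 0 - b T := by
  induction T with
  | zero => simp
  | succ T ih =>
    rw [Finset.sum_Icc_succ_top (Nat.succ_le_succ (Nat.zero_le T)), ih]
    simp

set_option maxHeartbeats 2000000 in
/-- Theorem 4: DMD-RSC regret bound. -/
theorem dmd_rsc_regret
    {E : Type*} [NormedAddCommGroup E] [NormedSpace ℝ E]
    (X : Set E) (hXne : X.Nonempty) (hX : Convex ℝ X)
    (R : ℝ) (hR : ∀ z ∈ X, ‖z‖ ≤ R)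
    (T : ℕ) (hT : 1 ≤ T) (d : ℕ → ℕ)
    (hd : ∀ t ∈ Finset.Icc 1 T, 1 ≤ d t ∧ t + d t - 1 ≤ T)
    (F : ℕ → Finset ℕ)
    (hF : ∀ t, F t = (Finset.Icc 1 T).filter (fun k => k + d k - 1 = t))
    (f : ℕ → E → ℝ) (Gstar : ℝ)
    (hfdiff : ∀ t ∈ Finset.Icc 1 T, Differentiable ℝ (f t))
    (hG : ∀ t ∈ Finset.Icc 1 T, ∀ z ∈ X, ‖fderiv ℝ (f t) z‖ ≤ Gstar)
    (ψ : E → ℝ) (σ γ ξ : ℝ) (hσ : 0 < σ) (hγ : 0 < γ) (hξ : 0 < ξ)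
    (hψdiff : Differentiable ℝ ψ)
    (B : E → E → ℝ)
    (hB : ∀ a b, B a b = ψ a - ψ b - fderiv ℝ ψ b (a - b))
    (hψsc : ∀ a ∈ X, ∀ b ∈ X, B a b ≥ σ / 2 * ‖a - b‖ ^ 2)
    (hψlip : ∀ a ∈ X, ∀ b ∈ X,
      ‖fderiv ℝ ψ a - fderiv ℝ ψ b‖ ≤ ξ * Gstar * ‖a - b‖)
    (hrel : ∀ t ∈ Finset.Icc 1 T, ∀ a ∈ X, ∀ b ∈ X,
      f t a - f t b - fderiv ℝ (f t) b (a - b) ≥ γ * B a b)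
    (x : ℕ → E) (hx1 : x 1 ∈ X)
    (hF1 : (F 1).Nonempty)
    (ην : ℕ → ℝ)
    (hην : ∀ t ∈ Finset.Icc 1 T,
      ην t = 1 / (γ * ∑ τ ∈ Finset.Icc 1 t, ((F τ).card : ℝ)))
    (Bt : ℕ → E → ℝ)
    (hBt : ∀ t z, Bt t z =
      (∑ k ∈ F t, fderiv ℝ (f k) (x t) z) + B z (x t) / ην t)
    (hupd : ∀ t ∈ Finset.Icc 1 T, (F t).Nonempty →
      x (t + 1) ∈ X ∧ ∃ ystar ∈ X, IsMinOn (Bt t) X ystar ∧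
        Bt t (x (t + 1)) ≤ Bt t ystar + (ην t) ^ 3 / (2 * σ))
    (hupd0 : ∀ t ∈ Finset.Icc 1 T, F t = ∅ → x (t + 1) = x t)
    :
    ∀ xstar ∈ X,
      ∑ t ∈ Finset.Icc 1 T, f t (x t) - ∑ t ∈ Finset.Icc 1 T, f t xstar
        ≤ (3 * (((Finset.Icc 1 T).sup d : ℕ) : ℝ) * Gstar ^ 2 + 8 * ξ * R * Gstar)
              * (1 + Real.log T) / (2 * σ * γ)
          + 6 * (((Finset.Icc 1 T).sup d : ℕ) : ℝ) * Gstar / (σ * γ ^ 2)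
          + 2 * (((Finset.Icc 1 T).sup d : ℕ) : ℝ) * ξ * Gstar ^ 2 / (σ ^ 2 * γ ^ 2) := by
  intro u hu
  have h1T : (1 : ℕ) ∈ Finset.Icc 1 T := Finset.mem_Icc.mpr ⟨le_refl 1, hT⟩
  set D : ℕ := (Finset.Icc 1 T).sup d with hD
  set Sr : ℕ → ℝ := fun t => ∑ τ ∈ Finset.Icc 1 t, ((F τ).card : ℝ) with hSrdef
  clear_value Sr
  -- basic positivity facts
  have hG0 : 0 ≤ Gstar := by
    obtain ⟨z, hz⟩ := hXne
    exact le_trans (norm_nonneg _) (hG 1 h1T z hz)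
  have hR0 : 0 ≤ R := le_trans (norm_nonneg _) (hR _ hx1)
  have hn1 : 1 ≤ (F 1).card := Finset.card_pos.mpr hF1
  have hSpos : ∀ t : ℕ, 1 ≤ t → (1:ℝ) ≤ Sr t := by
    intro t ht
    rw [hSrdef]
    exact Spos (fun τ => (F τ).card) hn1 ht
  have hD1 : 1 ≤ D := le_trans (hd 1 h1T).1 (Finset.le_sup h1T)
  have hD0 : (0:ℝ) ≤ (D:ℝ) := Nat.cast_nonneg D
  -- iterates stay in X
  have hxmem : ∀ t : ℕ, 1 ≤ t → t ≤ T + 1 → x t ∈ X := by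
    have key : ∀ m : ℕ, 1 + m ≤ T + 1 → x (1 + m) ∈ X := by
      intro m
      induction m with
      | zero => intro _; simpa using hx1
      | succ m ih =>
        intro h
        have htI : 1 + m ∈ Finset.Icc 1 T := Finset.mem_Icc.mpr ⟨by omega, by omega⟩
        have heq : 1 + (m + 1) = (1 + m) + 1 := by omega
        rcases Finset.eq_empty_or_nonempty (F (1 + m)) with he | hne
        · rw [heq, hupd0 _ htI he]; exact ih (by omega)
        · rw [heq]; exact (hupd _ htI hne).1
    intro t h1 h2
    obtain ⟨m, rfl⟩ := Nat.exists_eq_add_of_le h1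
    exact key m h2
  have hB0 : ∀ a ∈ X, ∀ b ∈ X, 0 ≤ B a b := by
    intro a ha b hb
    have := hψsc a ha b hb
    nlinarith [norm_nonneg (a - b), sq_nonneg ‖a - b‖]
  -- three-point identity
  have I1 : ∀ a b c : E, B a c - B b c = B a b + (fderiv ℝ ψ b - fderiv ℝ ψ c) (a - b) := by
    intro a b c
    simp only [hB, map_sub, ContinuousLinearMap.sub_apply]
    ring
  -- fiberwise summation
  have hfib : ∀ h : ℕ → ℝ, ∑ t ∈ Finset.Icc 1 T, ∑ k ∈ F t, h k = ∑ k ∈ Finset.Icc 1 T, h k := by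
    intro h
    have hmap : ∀ k ∈ Finset.Icc 1 T, k + d k - 1 ∈ Finset.Icc 1 T := by
      intro k hk
      obtain ⟨hk1, hk2⟩ := Finset.mem_Icc.mp hk
      exact Finset.mem_Icc.mpr ⟨by have := (hd k hk).1; omega, (hd k hk).2⟩
    have := Finset.sum_fiberwise_of_maps_to hmap h
    rw [← this]
    apply Finset.sum_congr rfl
    intro t _
    rw [hF t]
  -- S T = T
  have hST : Sr T = (T : ℝ) := by
    have h1 : Sr T = ∑ t ∈ Finset.Icc 1 T, ∑ k ∈ F t, (1:ℝ) := by
      rw [hSrdef]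
      apply Finset.sum_congr rfl
      intro t _
      simp
    rw [h1, hfib (fun _ => (1:ℝ))]
    simp
  -- card F t ≤ D
  have hnD : ∀ t, ((F t).card : ℝ) ≤ (D:ℝ) := by
    intro t
    have hsub : F t ⊆ Finset.Icc (t + 1 - D) t := by
      intro k hk
      rw [hF t, Finset.mem_filter] at hk
      obtain ⟨hkI, hkt⟩ := hk
      have hdk1 := (hd k hkI).1
      have hkd : d k ≤ D := Finset.le_sup hkI
      have hk1 := (Finset.mem_Icc.mp hkI).1
      exact Finset.mem_Icc.mpr ⟨by omega, by omega⟩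
    have := Finset.card_le_card hsub
    have hcard : (Finset.Icc (t + 1 - D) t).card ≤ D := by
      rw [Nat.card_Icc]; omega
    exact_mod_cast le_trans this hcard
  -- the big per-step bound
  have step_main : ∀ t ∈ Finset.Icc 1 T,
      (∑ k ∈ F t, (f k (x t) - f k u))
        ≤ ((F t).card:ℝ)^2 * Gstar^2/(2*σ*γ*Sr t)
          + 2*R*ξ*Gstar*((F t).card:ℝ)/(σ*γ*Sr t)
          + γ * Sr (t-1) * B u (x t) - γ * Sr t * B u (x (t+1))
      ∧ ‖x (t+1) - x t‖ ≤ ((F t).card:ℝ)*Gstar/(σ*γ*Sr t)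
          + ((F t).card:ℝ)/(σ*γ^2*(Sr t)^2) := by
    intro t ht
    obtain ⟨ht1, htT⟩ := Finset.mem_Icc.mp ht
    have hxt : x t ∈ X := hxmem t ht1 (by omega)
    have hS1 : (1:ℝ) ≤ Sr t := hSpos t ht1
    have hS0 : (0:ℝ) < Sr t := by linarith
    have hSsucc : Sr t = Sr (t-1) + ((F t).card:ℝ) := by
      have htt : (t-1)+1 = t := by omega
      have h := Finset.sum_Icc_succ_top (by omega : 1 ≤ (t-1)+1) (fun τ => ((F τ).card:ℝ))
      rw [htt] at h
      simp only [hSrdef]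
      exact h
    rcases Finset.eq_empty_or_nonempty (F t) with he | hne
    · -- empty feedback set: everything is zero
      have hx1t : x (t+1) = x t := hupd0 t ht he
      have hc0 : ((F t).card:ℝ) = 0 := by rw [he]; simp
      have hSeq : Sr (t-1) = Sr t := by rw [hSsucc, hc0, add_zero]
      constructor
      · have hsum0 : ∑ k ∈ F t, (f k (x t) - f k u) = 0 := by rw [he]; simp
        rw [hsum0, hc0, hx1t, hSeq]
        have hz : ((0:ℝ)^2 * Gstar^2/(2*σ*γ*Sr t) + 2*R*ξ*Gstar*0/(σ*γ*Sr t)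
            + γ*Sr t*B u (x t) - γ*Sr t*B u (x t)) = 0 := by ring
        linarith [hz]
      · rw [hx1t, hc0]
        simp
    · -- nonempty feedback set
      obtain ⟨hxt1, y, hyX, hymin, happ⟩ := hupd t ht hne
      have hη : ην t = 1/(γ * Sr t) := by
        rw [hην t ht]
        simp only [hSrdef]
      have hη0 : 0 < ην t := by
        rw [hη]
        exact one_div_pos.mpr (mul_pos hγ hS0)
      have hγS : γ * Sr t ≠ 0 := ne_of_gt (mul_pos hγ hS0)
      have hσ' : σ ≠ 0 := ne_of_gt hσ
      have hγ' : γ ≠ 0 := ne_of_gt hγ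
      have hS' : Sr t ≠ 0 := ne_of_gt hS0
      have hnc1 : (1:ℝ) ≤ ((F t).card:ℝ) := by
        exact_mod_cast Finset.card_pos.mpr hne
      have hnc0 : (0:ℝ) ≤ ((F t).card:ℝ) := by linarith
      -- the linear functional g
      set g : E →L[ℝ] ℝ := ∑ k ∈ F t, fderiv ℝ (f k) (x t) with hg
      have hgapp : ∀ w, g w = ∑ k ∈ F t, fderiv ℝ (f k) (x t) w := by
        intro w
        rw [hg]
        exact ContinuousLinearMap.sum_apply _ _ _
      have hgnorm : ∀ w, |g w| ≤ ((F t).card:ℝ) * Gstar * ‖w‖ := by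
        intro w
        rw [hgapp]
        calc |∑ k ∈ F t, fderiv ℝ (f k) (x t) w|
            ≤ ∑ k ∈ F t, |fderiv ℝ (f k) (x t) w| := Finset.abs_sum_le_sum_abs _ _
          _ ≤ ∑ k ∈ F t, Gstar * ‖w‖ := by
              apply Finset.sum_le_sum
              intro k hk
              have hkI : k ∈ Finset.Icc 1 T := by
                rw [hF t, Finset.mem_filter] at hk; exact hk.1
              refine le_trans ((fderiv ℝ (f k) (x t)).le_opNorm w) ?_
              exact mul_le_mul_of_nonneg_right (hG k hkI (x t) hxt) (norm_nonneg _)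
          _ = ((F t).card:ℝ) * Gstar * ‖w‖ := by
              rw [Finset.sum_const, nsmul_eq_mul]; ring
      -- derivative of Bt t at y
      set L : E →L[ℝ] ℝ := g + (ην t)⁻¹ • (fderiv ℝ ψ y - fderiv ℝ ψ (x t)) with hL
      have hBtfun : Bt t = fun z => g z + (ψ z - ψ (x t) - fderiv ℝ ψ (x t) (z - x t)) / ην t := by
        funext z
        rw [hBt t z, hB z (x t), hgapp]
      have hder : HasFDerivAt (Bt t) L y := by
        rw [hBtfun]
        have h2 : HasFDerivAt (fun z => (fderiv ℝ ψ (x t)) (z - x t)) (fderiv ℝ ψ (x t)) y := by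
          simpa [map_sub] using
            ((fderiv ℝ ψ (x t)).hasFDerivAt (x := y)).sub_const ((fderiv ℝ ψ (x t)) (x t))
        have h5 : HasFDerivAt (fun z => ψ z - ψ (x t) - (fderiv ℝ ψ (x t)) (z - x t))
            (fderiv ℝ ψ y - fderiv ℝ ψ (x t)) y :=
          (((hψdiff y).hasFDerivAt).sub_const (ψ (x t))).sub h2
        have h6 : HasFDerivAt (fun z => (ψ z - ψ (x t) - (fderiv ℝ ψ (x t)) (z - x t)) / ην t)
            ((ην t)⁻¹ • (fderiv ℝ ψ y - fderiv ℝ ψ (x t))) y := by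
          simpa [div_eq_inv_mul] using h5.const_mul (ην t)⁻¹
        exact (g.hasFDerivAt).add h6
      have hLapp : ∀ w, L w = g w + (ην t)⁻¹ * ((fderiv ℝ ψ y) w - (fderiv ℝ ψ (x t)) w) := by
        intro w
        rw [hL]
        simp [ContinuousLinearMap.add_apply, ContinuousLinearMap.smul_apply,
          ContinuousLinearMap.sub_apply, smul_eq_mul]
      have hFOC : ∀ z ∈ X, 0 ≤ L (z - y) := fun z hz => foc_convex hX hyX hz hymin hder
      -- key growth inequality
      have hKey : ∀ z, Bt t z - Bt t y = L (z - y) + B z y / ην t := by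
        intro z
        have hI := I1 z y (x t)
        rw [ContinuousLinearMap.sub_apply] at hI
        have e1 : Bt t z = g z + B z (x t) / ην t := by rw [hBt t z, ← hgapp]
        have e2 : Bt t y = g y + B y (x t) / ην t := by rw [hBt t y, ← hgapp]
        have e3 : g (z - y) = g z - g y := map_sub g z y
        rw [e1, e2, hLapp, e3]
        rw [div_eq_inv_mul, div_eq_inv_mul, div_eq_inv_mul]
        linear_combination (ην t)⁻¹ * hI
      have hgrow : ∀ z ∈ X, B z y / ην t ≤ Bt t z - Bt t y := by
        intro z hz
        have h1 := hFOC z hz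
        have h2 := hKey z
        linarith
      have hBself : B (x t) (x t) = 0 := by rw [hB]; simp
      have hBtxt : Bt t (x t) = g (x t) := by
        rw [hBt t (x t), ← hgapp, hBself, zero_div, add_zero]
      -- bound on ‖x t - y‖
      have hBxty : σ/2 * ‖x t - y‖^2 ≤ B (x t) y := hψsc (x t) hxt y hyX
      have hByxt : σ/2 * ‖x t - y‖^2 ≤ B y (x t) := by
        have h := hψsc y hyX (x t) hxt
        rw [norm_sub_rev y (x t)] at h
        exact h
      have hBty_eq : Bt t (x t) - Bt t y = g (x t - y) - B y (x t) / ην t := by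
        rw [hBtxt, hBt t y, ← hgapp, map_sub]
        ring
      have hga : g (x t - y) ≤ ((F t).card:ℝ) * Gstar * ‖x t - y‖ := by
        have h1 := hgnorm (x t - y)
        have h2 := le_abs_self (g (x t - y))
        linarith
      have haineq : ‖x t - y‖ ≤ ην t * ((F t).card:ℝ) * Gstar / σ := by
        have h1 : B (x t) y / ην t ≤ Bt t (x t) - Bt t y := hgrow (x t) hxt
        have h2 : (σ/2 * ‖x t - y‖^2) / ην t ≤ B (x t) y / ην t :=
          div_le_div_of_nonneg_right hBxty hη0.le
        have h3 : (σ/2 * ‖x t - y‖^2) / ην t ≤ B y (x t) / ην t :=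
          div_le_div_of_nonneg_right hByxt hη0.le
        have h4 : (σ/2 * ‖x t - y‖^2) / ην t + (σ/2 * ‖x t - y‖^2) / ην t
            ≤ ((F t).card:ℝ) * Gstar * ‖x t - y‖ := by
          linarith [hBty_eq, hga]
        have h5 : σ * ‖x t - y‖^2 ≤ ((F t).card:ℝ) * Gstar * ‖x t - y‖ * ην t := by
          have hc : (σ/2 * ‖x t - y‖^2) / ην t + (σ/2 * ‖x t - y‖^2) / ην t
              = σ * ‖x t - y‖^2 / ην t := by ring
          rw [hc, div_le_iff₀ hη0] at h4
          exact h4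
        rcases eq_or_lt_of_le (norm_nonneg (x t - y)) with h0 | h0
        · rw [← h0]
          exact div_nonneg (mul_nonneg (mul_nonneg hη0.le hnc0) hG0) hσ.le
        · rw [le_div_iff₀ hσ]
          have h6 : (σ * ‖x t - y‖) * ‖x t - y‖ ≤ (ην t * ((F t).card:ℝ) * Gstar) * ‖x t - y‖ := by
            nlinarith [h5]
          have := le_of_mul_le_mul_right h6 h0
          linarith
      -- bound on ‖x (t+1) - y‖
      have hηsq0 : (0:ℝ) ≤ (ην t)^2/σ := div_nonneg (sq_nonneg _) hσ.le
      have hεineq : ‖x (t+1) - y‖ ≤ (ην t)^2 / σ := by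
        have h1 : B (x (t+1)) y / ην t ≤ Bt t (x (t+1)) - Bt t y := hgrow _ hxt1
        have h2 : Bt t (x (t+1)) - Bt t y ≤ (ην t)^3/(2*σ) := by linarith [happ]
        have h3 : σ/2 * ‖x (t+1) - y‖^2 ≤ B (x (t+1)) y := hψsc (x (t+1)) hxt1 y hyX
        have h4 : (σ/2 * ‖x (t+1) - y‖^2) / ην t ≤ (ην t)^3/(2*σ) := by
          calc (σ/2 * ‖x (t+1) - y‖^2) / ην t ≤ B (x (t+1)) y / ην t :=
                div_le_div_of_nonneg_right h3 hη0.le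
            _ ≤ Bt t (x (t+1)) - Bt t y := h1
            _ ≤ (ην t)^3/(2*σ) := h2
        have h5 : ‖x (t+1) - y‖^2 ≤ ((ην t)^2/σ)^2 := by
          rw [div_le_div_iff₀ hη0 (by positivity : (0:ℝ) < 2*σ)] at h4
          rw [div_pow, le_div_iff₀ (by positivity : (0:ℝ) < σ^2)]
          nlinarith [h4]
        have h6 : ‖x (t+1) - y‖ ≤ Real.sqrt (((ην t)^2/σ)^2) := by
          rw [← Real.sqrt_sq (norm_nonneg (x (t+1) - y))]
          exact Real.sqrt_le_sqrt h5
        rwa [Real.sqrt_sq hηsq0] at h6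
      -- step-size bound (second conjunct)
      have hstep : ‖x (t+1) - x t‖ ≤ ((F t).card:ℝ)*Gstar/(σ*γ*Sr t)
          + ((F t).card:ℝ)/(σ*γ^2*(Sr t)^2) := by
        have htri : ‖x (t+1) - x t‖ ≤ ‖x (t+1) - y‖ + ‖x t - y‖ := by
          have h := dist_triangle (x (t+1)) y (x t)
          rw [dist_eq_norm, dist_eq_norm, dist_eq_norm] at h
          rw [norm_sub_rev y (x t)] at h
          exact h
        have he1 : ην t * ((F t).card:ℝ) * Gstar / σ = ((F t).card:ℝ)*Gstar/(σ*γ*Sr t) := by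
          rw [hη]
          field_simp
        have he2 : (ην t)^2/σ ≤ ((F t).card:ℝ)/(σ*γ^2*(Sr t)^2) := by
          rw [hη]
          have e : (1/(γ*Sr t))^2/σ = 1/(σ*γ^2*(Sr t)^2) := by
            field_simp
          rw [e]
          exact div_le_div_of_nonneg_right hnc1 (by positivity)
        calc ‖x (t+1) - x t‖ ≤ ‖x (t+1) - y‖ + ‖x t - y‖ := htri
          _ ≤ (ην t)^2/σ + ην t * ((F t).card:ℝ) * Gstar / σ := add_le_add hεineq haineq
          _ ≤ ((F t).card:ℝ)/(σ*γ^2*(Sr t)^2) + ((F t).card:ℝ)*Gstar/(σ*γ*Sr t) := by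
              rw [he1]
              exact add_le_add he2 (le_refl _)
          _ = ((F t).card:ℝ)*Gstar/(σ*γ*Sr t) + ((F t).card:ℝ)/(σ*γ^2*(Sr t)^2) := by ring
      -- FOC at u
      have hfocu := hFOC u hu
      have hgyu : g (y - u) ≤ (ην t)⁻¹ * (B u (x t) - B y (x t) - B u y) := by
        have hI2 := I1 u y (x t)
        rw [ContinuousLinearMap.sub_apply] at hI2
        rw [hLapp] at hfocu
        have hX2 : (fderiv ℝ ψ y) (u-y) - (fderiv ℝ ψ (x t)) (u-y)
            = B u (x t) - B y (x t) - B u y := by linarith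
        rw [hX2] at hfocu
        have hgneg : g (y - u) = - g (u - y) := by
          rw [show y - u = -(u-y) from (neg_sub u y).symm, map_neg]
        rw [hgneg]
        linarith
      -- Young's inequality part
      have hyoung : g (x t - y) - B y (x t)/ην t ≤ ην t * (((F t).card:ℝ)*Gstar)^2/(2*σ) := by
        have h3 : (σ/2 * ‖x t - y‖^2) / ην t ≤ B y (x t) / ην t :=
          div_le_div_of_nonneg_right hByxt hη0.le
        have e : (σ/2 * ‖x t - y‖^2) / ην t * ην t = σ/2 * ‖x t - y‖^2 :=
          div_mul_cancel₀ _ (ne_of_gt hη0)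
        have e2 : ην t * (((F t).card:ℝ)*Gstar)^2/(2*σ)*(2*σ) = ην t * (((F t).card:ℝ)*Gstar)^2 :=
          div_mul_cancel₀ _ (by positivity)
        have h4 : ((F t).card:ℝ)*Gstar*‖x t - y‖ - (σ/2 * ‖x t - y‖^2) / ην t
            ≤ ην t * (((F t).card:ℝ)*Gstar)^2/(2*σ) := by
          nlinarith [sq_nonneg (ην t*(((F t).card:ℝ)*Gstar) - σ*‖x t - y‖), mul_pos hη0 hσ,
            hη0, hσ, e, e2, sq_nonneg ‖x t - y‖]
        linarith [hga, h3]
      -- lower bound on B u y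
      have hBuy : B u (x (t+1)) - 2*R*ξ*Gstar*(ην t)^2/σ ≤ B u y := by
        have hI3 := I1 u (x (t+1)) y
        have hBx'y : 0 ≤ B (x (t+1)) y := hB0 _ hxt1 _ hyX
        have hnormux : ‖u - x (t+1)‖ ≤ 2*R := by
          have h1 := norm_sub_le u (x (t+1))
          have h2 := hR u hu
          have h3 := hR (x (t+1)) hxt1
          linarith
        have hl := hψlip (x (t+1)) hxt1 y hyX
        have happly : |(fderiv ℝ ψ (x (t+1)) - fderiv ℝ ψ y) (u - x (t+1))|
            ≤ (ξ*Gstar*‖x (t+1) - y‖) * (2*R) := by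
          refine le_trans ((fderiv ℝ ψ (x (t+1)) - fderiv ℝ ψ y).le_opNorm _) ?_
          apply mul_le_mul hl hnormux (norm_nonneg _)
          exact mul_nonneg (mul_nonneg hξ.le hG0) (norm_nonneg _)
        have hge : -((ξ*Gstar*‖x (t+1) - y‖)*(2*R))
            ≤ (fderiv ℝ ψ (x (t+1)) - fderiv ℝ ψ y) (u - x (t+1)) := by
          have := abs_le.mp happly
          linarith [this.1]
        have hεsq : ξ*Gstar*‖x (t+1) - y‖*(2*R) ≤ ξ*Gstar*((ην t)^2/σ)*(2*R) := by
          apply mul_le_mul_of_nonneg_right _ (by linarith [hR0])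
          exact mul_le_mul_of_nonneg_left hεineq (mul_nonneg hξ.le hG0)
        have hring : ξ*Gstar*((ην t)^2/σ)*(2*R) = 2*R*ξ*Gstar*(ην t)^2/σ := by ring
        linarith [hI3, hBx'y, hge, hεsq]
      -- decomposition of g (x t - u)
      have hgdecomp : g (x t - u) ≤ ην t*(((F t).card:ℝ)*Gstar)^2/(2*σ)
          + (B u (x t) - B u (x (t+1)))/ην t + 2*R*ξ*Gstar*ην t/σ := by
        have hsplit : g (x t - u) = g (x t - y) + g (y - u) := by
          rw [← map_add]
          congr 1
          abel
        have e : B y (x t)/ην t + (ην t)⁻¹*(B u (x t) - B y (x t) - B u y)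
            = (B u (x t) - B u y)/ην t := by
          field_simp
          ring
        have h2 : (B u (x t) - B u y)/ην t
            ≤ (B u (x t) - B u (x (t+1)))/ην t + 2*R*ξ*Gstar*ην t/σ := by
          have h3 : B u (x t) - B u y
              ≤ B u (x t) - B u (x (t+1)) + 2*R*ξ*Gstar*(ην t)^2/σ := by
            linarith [hBuy]
          have h4 := div_le_div_of_nonneg_right h3 hη0.le
          have e2 : (B u (x t) - B u (x (t+1)) + 2*R*ξ*Gstar*(ην t)^2/σ)/ην t
              = (B u (x t) - B u (x (t+1)))/ην t + 2*R*ξ*Gstar*ην t/σ := by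
            field_simp
          rw [e2] at h4
          exact h4
        rw [hsplit]
        linarith [hyoung, hgyu, e, h2]
      -- relative strong convexity applied at x t
      have hrelsum : ∑ k ∈ F t, (f k (x t) - f k u)
          ≤ g (x t - u) - γ * ((F t).card:ℝ) * B u (x t) := by
        have each : ∀ k ∈ F t,
            f k (x t) - f k u ≤ fderiv ℝ (f k) (x t) (x t - u) - γ * B u (x t) := by
          intro k hk
          have hkI : k ∈ Finset.Icc 1 T := by
            rw [hF t, Finset.mem_filter] at hk; exact hk.1
          have h1 := hrel k hkI u hu (x t) hxt
          have h2 : fderiv ℝ (f k) (x t) (u - x t) = -(fderiv ℝ (f k) (x t) (x t - u)) := by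
            rw [show u - x t = -(x t - u) from (neg_sub (x t) u).symm, map_neg]
          linarith
        calc ∑ k ∈ F t, (f k (x t) - f k u)
            ≤ ∑ k ∈ F t, (fderiv ℝ (f k) (x t) (x t - u) - γ * B u (x t)) :=
              Finset.sum_le_sum each
          _ = g (x t - u) - γ * ((F t).card:ℝ) * B u (x t) := by
              rw [Finset.sum_sub_distrib, ← hgapp, Finset.sum_const, nsmul_eq_mul]
              ring
      -- final assembly of the first conjunct
      have hfinal : ∑ k ∈ F t, (f k (x t) - f k u)
          ≤ ((F t).card:ℝ)^2 * Gstar^2/(2*σ*γ*Sr t)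
            + 2*R*ξ*Gstar*((F t).card:ℝ)/(σ*γ*Sr t)
            + γ * Sr (t-1) * B u (x t) - γ * Sr t * B u (x (t+1)) := by
        have h1 : ∑ k ∈ F t, (f k (x t) - f k u)
            ≤ ην t*(((F t).card:ℝ)*Gstar)^2/(2*σ)
              + (B u (x t) - B u (x (t+1)))/ην t + 2*R*ξ*Gstar*ην t/σ
              - γ*((F t).card:ℝ)*B u (x t) := by
          linarith [hrelsum, hgdecomp]
        have e1 : ην t*(((F t).card:ℝ)*Gstar)^2/(2*σ)
            = ((F t).card:ℝ)^2 * Gstar^2/(2*σ*γ*Sr t) := by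
          rw [hη]
          field_simp
        have e2 : (B u (x t) - B u (x (t+1)))/ην t - γ*((F t).card:ℝ)*B u (x t)
            = γ * Sr (t-1) * B u (x t) - γ * Sr t * B u (x (t+1)) := by
          rw [hη, div_div_eq_mul_div, div_one]
          have hSr1 : Sr (t-1) = Sr t - ((F t).card:ℝ) := by rw [hSsucc]; ring
          rw [hSr1]
          ring
        have e3 : 2*R*ξ*Gstar*ην t/σ ≤ 2*R*ξ*Gstar*((F t).card:ℝ)/(σ*γ*Sr t) := by
          rw [hη]
          have e : 2*R*ξ*Gstar*(1/(γ*Sr t))/σ = (2*R*ξ*Gstar)/(σ*γ*Sr t) := by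
            field_simp
          rw [e]
          have e' : 2*R*ξ*Gstar*((F t).card:ℝ)/(σ*γ*Sr t)
              = (2*R*ξ*Gstar*((F t).card:ℝ))/(σ*γ*Sr t) := by ring
          rw [e']
          apply div_le_div_of_nonneg_right _ (by positivity)
          nlinarith [hnc1, hR0, hξ.le, hG0, mul_nonneg (mul_nonneg hR0 hξ.le) hG0]
        linarith [h1, e1, e2, e3]
      exact ⟨hfinal, hstep⟩
  -- harmonic sums
  have hlogT0 : 0 ≤ Real.log T := Real.log_nonneg (by exact_mod_cast hT)
  have hSrT : (∑ τ ∈ Finset.Icc 1 T, ((F τ).card : ℝ)) = (T:ℝ) := by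
    rw [← congrFun hSrdef T]
    exact hST
  have hH1 : ∑ t ∈ Finset.Icc 1 T, ((F t).card:ℝ) / Sr t ≤ 1 + Real.log T := by
    have h := harmonic_log (fun τ => (F τ).card) hn1 T hT
    rw [hSrT] at h
    simp only [hSrdef]
    exact h
  have hH2 : ∑ t ∈ Finset.Icc 1 T, ((F t).card:ℝ) / (Sr t)^2 ≤ 2 := by
    have h := harmonic_sq (fun τ => (F τ).card) hn1 T hT
    simp only [hSrdef]
    exact h
  -- key summation
  have keysum : ∑ t ∈ Finset.Icc 1 T, (∑ k ∈ F t, (f k (x t) - f k u))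
      ≤ (D:ℝ)*Gstar^2/(2*σ*γ) * (1 + Real.log T)
        + 2*R*ξ*Gstar/(σ*γ)*(1+Real.log T) := by
    have hbound := Finset.sum_le_sum (fun t ht => (step_main t ht).1)
    refine le_trans hbound ?_
    have hsplit : ∀ t : ℕ,
        ((F t).card:ℝ)^2 * Gstar^2/(2*σ*γ*Sr t)
          + 2*R*ξ*Gstar*((F t).card:ℝ)/(σ*γ*Sr t)
          + γ * Sr (t-1) * B u (x t) - γ * Sr t * B u (x (t+1))
        = (((F t).card:ℝ)^2 * Gstar^2/(2*σ*γ*Sr t)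
            + 2*R*ξ*Gstar*((F t).card:ℝ)/(σ*γ*Sr t))
          + (γ * Sr (t-1) * B u (x t) - γ * Sr t * B u (x (t+1))) := by
      intro t; ring
    simp only [hsplit]
    rw [Finset.sum_add_distrib]
    -- telescoping part
    have htel : ∑ t ∈ Finset.Icc 1 T,
        (γ * Sr (t-1) * B u (x t) - γ * Sr t * B u (x (t+1))) ≤ 0 := by
      have heq : ∑ t ∈ Finset.Icc 1 T,
          (γ * Sr (t-1) * B u (x t) - γ * Sr t * B u (x (t+1)))
          = γ * Sr 0 * B u (x 1) - γ * Sr T * B u (x (T+1)) := by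
        rw [← tel_sum (fun t => γ * Sr t * B u (x (t+1))) T]
        apply Finset.sum_congr rfl
        intro t ht
        have ht1 := (Finset.mem_Icc.mp ht).1
        have heq2 : (t-1)+1 = t := by omega
        simp only [heq2]
      rw [heq]
      have hSr0 : Sr 0 = 0 := by
        rw [hSrdef]; simp
      have hBT : 0 ≤ B u (x (T+1)) := hB0 u hu _ (hxmem (T+1) (by omega) (by omega))
      have hSrT : (0:ℝ) ≤ Sr T := by rw [hST]; positivity
      rw [hSr0]
      have : 0 ≤ γ * Sr T * B u (x (T+1)) := by
        apply mul_nonneg (mul_nonneg (le_of_lt hγ) hSrT) hBT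
      linarith
    -- harmonic part
    have hterm : ∀ t ∈ Finset.Icc 1 T,
        ((F t).card:ℝ)^2 * Gstar^2/(2*σ*γ*Sr t)
          + 2*R*ξ*Gstar*((F t).card:ℝ)/(σ*γ*Sr t)
        ≤ ((D:ℝ)*Gstar^2/(2*σ*γ)) * (((F t).card:ℝ)/Sr t)
          + (2*R*ξ*Gstar/(σ*γ)) * (((F t).card:ℝ)/Sr t) := by
      intro t ht
      have hS1 : (1:ℝ) ≤ Sr t := hSpos t (Finset.mem_Icc.mp ht).1
      have hS0 : (0:ℝ) < Sr t := by linarith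
      have hn0 : (0:ℝ) ≤ ((F t).card:ℝ) := Nat.cast_nonneg _
      have h1 : ((F t).card:ℝ)^2 * Gstar^2/(2*σ*γ*Sr t)
          ≤ ((D:ℝ)*Gstar^2/(2*σ*γ)) * (((F t).card:ℝ)/Sr t) := by
        rw [div_mul_div_comm, show (2*σ*γ)*Sr t = 2*σ*γ*Sr t from by ring]
        apply div_le_div_of_nonneg_right ?_ (by positivity)
        nlinarith [mul_le_mul_of_nonneg_right (hnD t) (mul_nonneg hn0 (sq_nonneg Gstar))]
      have h2 : 2*R*ξ*Gstar*((F t).card:ℝ)/(σ*γ*Sr t)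
          = (2*R*ξ*Gstar/(σ*γ)) * (((F t).card:ℝ)/Sr t) := by
        rw [div_mul_div_comm, show (σ*γ)*Sr t = σ*γ*Sr t from by ring]
      linarith
    have hsum2 : ∑ t ∈ Finset.Icc 1 T,
        (((F t).card:ℝ)^2 * Gstar^2/(2*σ*γ*Sr t)
          + 2*R*ξ*Gstar*((F t).card:ℝ)/(σ*γ*Sr t))
        ≤ ((D:ℝ)*Gstar^2/(2*σ*γ) + 2*R*ξ*Gstar/(σ*γ))
            * ∑ t ∈ Finset.Icc 1 T, (((F t).card:ℝ)/Sr t) := by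
      rw [Finset.mul_sum]
      apply Finset.sum_le_sum
      intro t ht
      have := hterm t ht
      linarith [this]
    have hfin : ((D:ℝ)*Gstar^2/(2*σ*γ) + 2*R*ξ*Gstar/(σ*γ))
            * ∑ t ∈ Finset.Icc 1 T, (((F t).card:ℝ)/Sr t)
        ≤ ((D:ℝ)*Gstar^2/(2*σ*γ) + 2*R*ξ*Gstar/(σ*γ)) * (1 + Real.log T) := by
      apply mul_le_mul_of_nonneg_left hH1
      positivity
    have hexp : ((D:ℝ)*Gstar^2/(2*σ*γ) + 2*R*ξ*Gstar/(σ*γ)) * (1 + Real.log T)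
        = (D:ℝ)*Gstar^2/(2*σ*γ) * (1 + Real.log T)
          + 2*R*ξ*Gstar/(σ*γ)*(1+Real.log T) := by ring
    linarith [htel, hsum2, hfin]
  -- drift summation
  have driftsum : ∑ t ∈ Finset.Icc 1 T, ∑ k ∈ F t, Gstar * ‖x k - x t‖
      ≤ Gstar * (D:ℝ) * (Gstar*(1+Real.log T)/(σ*γ) + 2/(σ*γ^2)) := by
    have hstep2 := fun s hs => (step_main s hs).2
    have hkt : ∀ t ∈ Finset.Icc 1 T, ∀ k ∈ F t,
        ‖x k - x t‖ ≤ ∑ s ∈ Finset.Icc 1 T,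
          (if s ∈ Finset.Ico k (k + d k - 1) then ‖x (s+1) - x s‖ else 0) := by
      intro t ht k hk
      rw [hF t, Finset.mem_filter] at hk
      obtain ⟨hkI, hkt'⟩ := hk
      have hk1 := (Finset.mem_Icc.mp hkI).1
      have hdk1 := (hd k hkI).1
      have hkle : k ≤ t := by omega
      have h1 : ‖x k - x t‖ ≤ ∑ s ∈ Finset.Ico k t, ‖x (s+1) - x s‖ := by
        obtain ⟨m, rfl⟩ := Nat.exists_eq_add_of_le hkle
        exact norm_tel x k m
      have hsub : Finset.Ico k t ⊆ Finset.Icc 1 T := by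
        intro s hs
        rw [Finset.mem_Ico] at hs
        have ht2 := (Finset.mem_Icc.mp ht).2
        rw [Finset.mem_Icc]
        omega
      have h2 : ∑ s ∈ Finset.Icc 1 T, (if s ∈ Finset.Ico k t then ‖x (s+1) - x s‖ else 0)
          = ∑ s ∈ Finset.Ico k t, ‖x (s+1) - x s‖ := by
        rw [Finset.sum_ite_mem, Finset.inter_eq_right.mpr hsub]
      rw [hkt', h2]
      exact h1
    have hG0D : 0 ≤ Gstar * (D:ℝ) := mul_nonneg hG0 hD0
    calc ∑ t ∈ Finset.Icc 1 T, ∑ k ∈ F t, Gstar * ‖x k - x t‖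
        ≤ ∑ t ∈ Finset.Icc 1 T, ∑ k ∈ F t, (Gstar * ∑ s ∈ Finset.Icc 1 T,
            (if s ∈ Finset.Ico k (k + d k - 1) then ‖x (s+1) - x s‖ else 0)) := by
          apply Finset.sum_le_sum; intro t ht
          apply Finset.sum_le_sum; intro k hk
          exact mul_le_mul_of_nonneg_left (hkt t ht k hk) hG0
      _ = ∑ k ∈ Finset.Icc 1 T, (Gstar * ∑ s ∈ Finset.Icc 1 T,
            (if s ∈ Finset.Ico k (k + d k - 1) then ‖x (s+1) - x s‖ else 0)) := hfib _
      _ = Gstar * ∑ s ∈ Finset.Icc 1 T, ∑ k ∈ Finset.Icc 1 T,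
            (if s ∈ Finset.Ico k (k + d k - 1) then ‖x (s+1) - x s‖ else 0) := by
          rw [← Finset.mul_sum, Finset.sum_comm]
      _ ≤ Gstar * ∑ s ∈ Finset.Icc 1 T, ((D:ℝ) * ‖x (s+1) - x s‖) := by
          apply mul_le_mul_of_nonneg_left _ hG0
          apply Finset.sum_le_sum
          intro s hs
          have hcnt : ∑ k ∈ Finset.Icc 1 T,
              (if s ∈ Finset.Ico k (k + d k - 1) then ‖x (s+1) - x s‖ else 0)
              = ((Finset.Icc 1 T).filter (fun k => s ∈ Finset.Ico k (k + d k - 1))).card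
                  • ‖x (s+1) - x s‖ := by
            rw [← Finset.sum_filter, Finset.sum_const]
          rw [hcnt]
          have hsubA : (Finset.Icc 1 T).filter (fun k => s ∈ Finset.Ico k (k + d k - 1))
              ⊆ Finset.Icc (s+2-D) s := by
            intro k hk
            rw [Finset.mem_filter] at hk
            obtain ⟨hkI, hks⟩ := hk
            rw [Finset.mem_Ico] at hks
            have hkd : d k ≤ D := Finset.le_sup hkI
            have hk1 := (Finset.mem_Icc.mp hkI).1
            rw [Finset.mem_Icc]
            omega
          have hcard : ((Finset.Icc 1 T).filter (fun k => s ∈ Finset.Ico k (k + d k - 1))).card ≤ D := by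
            refine le_trans (Finset.card_le_card hsubA) ?_
            rw [Nat.card_Icc]
            omega
          rw [nsmul_eq_mul]
          apply mul_le_mul_of_nonneg_right _ (norm_nonneg _)
          exact_mod_cast hcard
      _ = Gstar * (D:ℝ) * ∑ s ∈ Finset.Icc 1 T, ‖x (s+1) - x s‖ := by
          rw [← Finset.mul_sum, ← mul_assoc]
      _ ≤ Gstar * (D:ℝ) * (Gstar*(1+Real.log T)/(σ*γ) + 2/(σ*γ^2)) := by
          apply mul_le_mul_of_nonneg_left _ hG0D
          calc ∑ s ∈ Finset.Icc 1 T, ‖x (s+1) - x s‖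
              ≤ ∑ s ∈ Finset.Icc 1 T, (((F s).card:ℝ)*Gstar/(σ*γ*Sr s)
                  + ((F s).card:ℝ)/(σ*γ^2*(Sr s)^2)) := Finset.sum_le_sum hstep2
            _ = (Gstar/(σ*γ)) * (∑ s ∈ Finset.Icc 1 T, ((F s).card:ℝ)/Sr s)
                + (1/(σ*γ^2)) * (∑ s ∈ Finset.Icc 1 T, ((F s).card:ℝ)/(Sr s)^2) := by
                rw [Finset.mul_sum, Finset.mul_sum, ← Finset.sum_add_distrib]
                apply Finset.sum_congr rfl
                intro s hs
                ring
            _ ≤ (Gstar/(σ*γ)) * (1+Real.log T) + (1/(σ*γ^2)) * 2 := by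
                apply add_le_add
                · exact mul_le_mul_of_nonneg_left hH1 (div_nonneg hG0 (by positivity))
                · exact mul_le_mul_of_nonneg_left hH2 (by positivity)
            _ = Gstar*(1+Real.log T)/(σ*γ) + 2/(σ*γ^2) := by ring
  -- lipschitz of f on X
  have hlipf : ∀ k ∈ Finset.Icc 1 T, ∀ t ∈ Finset.Icc 1 T,
      f k (x k) - f k (x t) ≤ Gstar * ‖x k - x t‖ := by
    intro k hk t ht
    obtain ⟨hk1, hk2⟩ := Finset.mem_Icc.mp hk
    obtain ⟨ht1, ht2⟩ := Finset.mem_Icc.mp ht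
    have hxk : x k ∈ X := hxmem k hk1 (by omega)
    have hxt : x t ∈ X := hxmem t ht1 (by omega)
    have h1 := hrel k hk (x t) hxt (x k) hxk
    have h2 : 0 ≤ B (x t) (x k) := hB0 _ hxt _ hxk
    have h3 : fderiv ℝ (f k) (x k) (x t - x k) ≥ -(Gstar * ‖x k - x t‖) := by
      have hb := (fderiv ℝ (f k) (x k)).le_opNorm (x t - x k)
      have hb2 : ‖fderiv ℝ (f k) (x k)‖ ≤ Gstar := hG k hk (x k) hxk
      have habs : |fderiv ℝ (f k) (x k) (x t - x k)| ≤ Gstar * ‖x t - x k‖ := by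
        refine le_trans ((fderiv ℝ (f k) (x k)).le_opNorm _) ?_
        exact mul_le_mul_of_nonneg_right hb2 (norm_nonneg _)
      rw [norm_sub_rev (x k) (x t)]
      have := abs_le.mp habs
      linarith [this.1]
    nlinarith [mul_pos hγ (lt_of_lt_of_le (by norm_num : (0:ℝ) < 1) (le_refl 1))]
  -- assembly
  have hlT0 : (0:ℝ) ≤ 1 + Real.log T := by linarith
  have e1 : ∑ t ∈ Finset.Icc 1 T, f t (x t) - ∑ t ∈ Finset.Icc 1 T, f t u
      = ∑ t ∈ Finset.Icc 1 T, (f t (x t) - f t u) := (Finset.sum_sub_distrib _ _).symm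
  have e2 : ∑ t ∈ Finset.Icc 1 T, (f t (x t) - f t u)
      = ∑ t ∈ Finset.Icc 1 T, ∑ k ∈ F t, (f k (x k) - f k u) := (hfib _).symm
  have e3 : ∑ t ∈ Finset.Icc 1 T, ∑ k ∈ F t, (f k (x k) - f k u)
      ≤ ∑ t ∈ Finset.Icc 1 T, ∑ k ∈ F t, (Gstar * ‖x k - x t‖ + (f k (x t) - f k u)) := by
    apply Finset.sum_le_sum
    intro t ht
    apply Finset.sum_le_sum
    intro k hk
    have hkI : k ∈ Finset.Icc 1 T := by
      rw [hF t, Finset.mem_filter] at hk; exact hk.1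
    have := hlipf k hkI t ht
    linarith
  have e4 : ∑ t ∈ Finset.Icc 1 T, ∑ k ∈ F t, (Gstar * ‖x k - x t‖ + (f k (x t) - f k u))
      = (∑ t ∈ Finset.Icc 1 T, ∑ k ∈ F t, Gstar * ‖x k - x t‖)
        + ∑ t ∈ Finset.Icc 1 T, (∑ k ∈ F t, (f k (x t) - f k u)) := by
    rw [← Finset.sum_add_distrib]
    apply Finset.sum_congr rfl
    intro t _
    rw [← Finset.sum_add_distrib]
  rw [e1, e2]
  have e5 : ∑ t ∈ Finset.Icc 1 T, ∑ k ∈ F t, (f k (x k) - f k u)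
      ≤ Gstar * (D:ℝ) * (Gstar*(1+Real.log T)/(σ*γ) + 2/(σ*γ^2))
        + ((D:ℝ)*Gstar^2/(2*σ*γ) * (1 + Real.log T)
          + 2*R*ξ*Gstar/(σ*γ)*(1+Real.log T)) := by
    calc ∑ t ∈ Finset.Icc 1 T, ∑ k ∈ F t, (f k (x k) - f k u)
        ≤ ∑ t ∈ Finset.Icc 1 T, ∑ k ∈ F t, (Gstar * ‖x k - x t‖ + (f k (x t) - f k u)) := e3
      _ = _ + _ := e4
      _ ≤ _ := add_le_add driftsum keysum
  refine le_trans e5 ?_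
  rw [← sub_nonneg]
  have hdiff : (3 * (D:ℝ) * Gstar ^ 2 + 8 * ξ * R * Gstar) * (1 + Real.log T) / (2 * σ * γ)
          + 6 * (D:ℝ) * Gstar / (σ * γ ^ 2)
          + 2 * (D:ℝ) * ξ * Gstar ^ 2 / (σ ^ 2 * γ ^ 2)
      - (Gstar * (D:ℝ) * (Gstar*(1+Real.log T)/(σ*γ) + 2/(σ*γ^2))
        + ((D:ℝ)*Gstar^2/(2*σ*γ) * (1 + Real.log T)
          + 2*R*ξ*Gstar/(σ*γ)*(1+Real.log T)))
      = 2*ξ*R*Gstar/(σ*γ) * (1 + Real.log T)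
        + 4*(D:ℝ)*Gstar/(σ*γ^2) + 2*(D:ℝ)*ξ*Gstar^2/(σ^2*γ^2) := by
    field_simp
    ring
  rw [hdiff]
  have t1 : (0:ℝ) ≤ 2*ξ*R*Gstar/(σ*γ) * (1 + Real.log T) := by
    apply mul_nonneg _ hlT0
    positivity
  have t2 : (0:ℝ) ≤ 4*(D:ℝ)*Gstar/(σ*γ^2) := by positivity
  have t3 : (0:ℝ) ≤ 2*(D:ℝ)*ξ*Gstar^2/(σ^2*γ^2) := by positivity
  linarith
end

section
/- (Theorem 5) Under the SDMD-GC scheme with approximation error ρ_{t,i_k} = η³/(2σ), for every x* ∈ X the regret satisfies Reg_T := Σ_{t=1}^T f_t(x_t) − Σ_{t=1}^T f_t(x*) ≤ η(G⋆²T + 8ξRG⋆T + 2ηG⋆T + 4G⋆²D_T + 8ηG⋆D_T)/(2σ) + 2η²ξG⋆²D_T/σ² + B_ψ(x*; x₁)/η, where D_T := Σ_{t=1}^T d_t. -/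
set_option maxHeartbeats 1000000

open Finset

private lemma dir_deriv_le {E : Type*} [NormedAddCommGroup E] [NormedSpace ℝ E]
    {Φ : E → ℝ} {L : E →L[ℝ] ℝ} {p v : E} {c : ℝ}
    (hΦ : HasFDerivAt Φ L p)
    (h : ∀ θ : ℝ, θ ∈ Set.Ioc (0:ℝ) 1 → Φ (p + θ • v) ≤ Φ p + θ * c) :
    L v ≤ c := by
  have hc : HasDerivAt (fun θ : ℝ => p + θ • v) v 0 := by
    simpa using ((hasDerivAt_id (0:ℝ)).smul_const v).const_add p
  have hΦ' : HasFDerivAt Φ L (p + (0:ℝ) • v) := by simpa using hΦ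
  have hφ : HasDerivAt (fun θ : ℝ => Φ (p + θ • v)) (L v) 0 := by
    have := hΦ'.comp_hasDerivAt (x := (0:ℝ)) hc
    exact this
  have hw : HasDerivWithinAt (fun θ : ℝ => Φ (p + θ • v)) (L v) (Set.Ioi (0:ℝ)) 0 :=
    hφ.hasDerivWithinAt
  rw [hasDerivWithinAt_iff_tendsto_slope] at hw
  have hset : (Set.Ioi (0:ℝ)) \ {0} = Set.Ioi (0:ℝ) := by
    ext z; simp only [Set.mem_diff, Set.mem_Ioi, Set.mem_singleton_iff]
    exact ⟨fun h => h.1, fun hz => ⟨hz, ne_of_gt hz⟩⟩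
  rw [hset] at hw
  refine le_of_tendsto hw ?_
  filter_upwards [Ioc_mem_nhdsGT (zero_lt_one (α := ℝ))] with θ hθ
  have hθ0 : 0 < θ := hθ.1
  have hθc := h θ hθ
  have hslope : slope (fun θ : ℝ => Φ (p + θ • v)) 0 θ
      = (Φ (p + θ • v) - Φ (p + (0:ℝ) • v)) / θ := by
    rw [slope_def_field]; ring_nf
  rw [hslope]
  simp only [zero_smul, add_zero]
  rw [div_le_iff₀ hθ0]
  linarith

private lemma fo_min {E : Type*} [NormedAddCommGroup E] [NormedSpace ℝ E]
    {X : Set E} (hX : Convex ℝ X) {Φ : E → ℝ} {L : E →L[ℝ] ℝ} {p u : E}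
    (hmin : IsMinOn Φ X p) (hp : p ∈ X) (hu : u ∈ X)
    (hΦ : HasFDerivAt Φ L p) : 0 ≤ L (u - p) := by
  have h : (-L) (u - p) ≤ 0 := by
    refine dir_deriv_le hΦ.neg ?_
    intro θ hθ
    have hmem : p + θ • (u - p) ∈ X := by
      have := hX hp hu (by linarith [hθ.2] : (0:ℝ) ≤ 1 - θ) hθ.1.le (by ring)
      convert this using 1
      simp [smul_sub]; module
    have := hmin hmem
    simp only [Set.mem_setOf_eq] at this
    show -Φ (p + θ • (u - p)) ≤ -Φ p + θ * 0
    linarith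
  simpa using h

private lemma fo_convex {E : Type*} [NormedAddCommGroup E] [NormedSpace ℝ E]
    {X : Set E} {Φ : E → ℝ} {L : E →L[ℝ] ℝ} {p u : E}
    (hconv : ConvexOn ℝ X Φ) (hp : p ∈ X) (hu : u ∈ X)
    (hΦ : HasFDerivAt Φ L p) : Φ p - Φ u ≤ L (p - u) := by
  have h : L (u - p) ≤ Φ u - Φ p := by
    refine dir_deriv_le hΦ ?_
    intro θ hθ
    have h2 := hconv.2 hp hu (by linarith [hθ.2] : (0:ℝ) ≤ 1 - θ) hθ.1.le (by ring)
    calc Φ (p + θ • (u - p)) = Φ ((1 - θ) • p + θ • u) := by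
          congr 1; simp [smul_sub]; module
      _ ≤ (1 - θ) * Φ p + θ * Φ u := h2
      _ = Φ p + θ * (Φ u - Φ p) := by ring
  have : L (p - u) = - L (u - p) := by
    rw [← map_neg]; congr 1; abel
  rw [this]; linarith

private lemma idx_strictMono (s : Finset ℕ) {a b : ℕ} (ha : a ∈ s) (hb : b ∈ s) (hab : a < b) :
    (s.filter (fun z => z < a)).card < (s.filter (fun z => z < b)).card := by
  apply Finset.card_lt_card
  refine ⟨Finset.monotone_filter_right s (fun z _ hz => lt_trans hz hab), fun hsub => ?_⟩
  have : a ∈ s.filter (fun z => z < b) := Finset.mem_filter.mpr ⟨ha, hab⟩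
  have := hsub this
  exact absurd (Finset.mem_filter.mp this).2 (lt_irrefl a)

private lemma idx_inj (s : Finset ℕ) {a b : ℕ} (ha : a ∈ s) (hb : b ∈ s)
    (h : (s.filter (fun z => z < a)).card = (s.filter (fun z => z < b)).card) : a = b := by
  rcases lt_trichotomy a b with h1 | h1 | h1
  · exact absurd h (ne_of_lt (idx_strictMono s ha hb h1))
  · exact h1
  · exact absurd h.symm (ne_of_lt (idx_strictMono s hb ha h1))

private lemma idx_lt_card (s : Finset ℕ) {a : ℕ} (ha : a ∈ s) :
    (s.filter (fun z => z < a)).card < s.card := by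
  apply Finset.card_lt_card
  refine ⟨Finset.filter_subset _ _, fun hsub => ?_⟩
  exact absurd (Finset.mem_filter.mp (hsub ha)).2 (lt_irrefl a)

private lemma idx_surj (s : Finset ℕ) {i : ℕ} (hi : i < s.card) :
    ∃ a ∈ s, (s.filter (fun z => z < a)).card = i := by
  have := Finset.surj_on_of_inj_on_of_card_le
    (s := s) (t := Finset.range s.card)
    (fun a _ => (s.filter (fun z => z < a)).card)
    (fun a ha => Finset.mem_range.mpr (idx_lt_card s ha))
    (fun a b ha hb h => idx_inj s ha hb h)
    (by simp)
  obtain ⟨a, ha, hval⟩ := this i (Finset.mem_range.mpr hi)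
  exact ⟨a, ha, hval.symm⟩

private lemma clm_bound {E : Type*} [NormedAddCommGroup E] [NormedSpace ℝ E]
    (L : E →L[ℝ] ℝ) (v : E) {C : ℝ} (hC : ‖L‖ ≤ C) :
    L v ≤ C * ‖v‖ ∧ -(L v) ≤ C * ‖v‖ := by
  have h1 : ‖L v‖ ≤ C * ‖v‖ :=
    le_trans (L.le_opNorm v) (mul_le_mul_of_nonneg_right hC (norm_nonneg _))
  rw [Real.norm_eq_abs] at h1
  constructor
  · linarith [le_abs_self (L v)]
  · linarith [neg_abs_le (L v)]

private lemma telescope_Icc (h : ℕ → ℝ) : ∀ T : ℕ,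
    ∑ t ∈ Finset.Icc 1 T, (h t - h (t + 1)) = h 1 - h (T + 1)
  | 0 => by simp
  | (n + 1) => by
      rw [Finset.sum_Icc_succ_top (by omega : 1 ≤ n + 1), telescope_Icc h n]; ring

/-- Theorem 5: SDMD-GC regret bound. -/
theorem sdmd_gc_regret
    {E : Type*} [NormedAddCommGroup E] [NormedSpace ℝ E]
    (X : Set E) (hXne : X.Nonempty) (hX : Convex ℝ X)
    (R : ℝ) (hR : ∀ z ∈ X, ‖z‖ ≤ R)
    (T : ℕ) (hT : 1 ≤ T) (d : ℕ → ℕ)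
    (hd : ∀ t ∈ Finset.Icc 1 T, 1 ≤ d t ∧ t + d t - 1 ≤ T)
    (F : ℕ → Finset ℕ)
    (hF : ∀ t, F t = (Finset.Icc 1 T).filter (fun k => k + d k - 1 = t))
    (f : ℕ → E → ℝ) (Gstar : ℝ)
    (hfdiff : ∀ t ∈ Finset.Icc 1 T, Differentiable ℝ (f t))
    (hfconv : ∀ t ∈ Finset.Icc 1 T, ConvexOn ℝ X (f t))
    (hG : ∀ t ∈ Finset.Icc 1 T, ∀ z ∈ X, ‖fderiv ℝ (f t) z‖ ≤ Gstar)
    (ψ : E → ℝ) (σ ξ : ℝ) (hσ : 0 < σ) (hξ : 0 < ξ)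
    (hψdiff : Differentiable ℝ ψ)
    (B : E → E → ℝ)
    (hB : ∀ a b, B a b = ψ a - ψ b - fderiv ℝ ψ b (a - b))
    (hψsc : ∀ a ∈ X, ∀ b ∈ X, B a b ≥ σ / 2 * ‖a - b‖ ^ 2)
    (hψlip : ∀ a ∈ X, ∀ b ∈ X,
      ‖fderiv ℝ ψ a - fderiv ℝ ψ b‖ ≤ ξ * Gstar * ‖a - b‖)
    (η : ℝ) (hη : 0 < η)
    (x : ℕ → E) (xx : ℕ → ℕ → E) (hx1 : x 1 ∈ X)
    (hxxmem : ∀ t ∈ Finset.Icc 1 T, ∀ i ≤ (F t).card, xx t i ∈ X)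
    (hxx0 : ∀ t ∈ Finset.Icc 1 T, xx t 0 = x t)
    (hxnext : ∀ t ∈ Finset.Icc 1 T, x (t + 1) = xx t (F t).card)
    (A : ℕ → ℕ → E → ℝ)
    (hA : ∀ t k z, A t k z =
      fderiv ℝ (f k) (x k) z
        + B z (xx t ((F t).filter (fun s => s < k)).card) / η)
    (hopt : ∀ t ∈ Finset.Icc 1 T, ∀ k ∈ F t, ∃ ystar ∈ X,
      IsMinOn (A t k) X ystar ∧
        A t k (xx t (((F t).filter (fun s => s < k)).card + 1))
          ≤ A t k ystar + η ^ 3 / (2 * σ))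
    :
    ∀ xstar ∈ X,
      ∑ t ∈ Finset.Icc 1 T, f t (x t) - ∑ t ∈ Finset.Icc 1 T, f t xstar
        ≤ η * (Gstar ^ 2 * (T : ℝ) + 8 * ξ * R * Gstar * (T : ℝ)
              + 2 * η * Gstar * (T : ℝ)
              + 4 * Gstar ^ 2 * ∑ t ∈ Finset.Icc 1 T, (d t : ℝ)
              + 8 * η * Gstar * ∑ t ∈ Finset.Icc 1 T, (d t : ℝ)) / (2 * σ)
          + 2 * η ^ 2 * ξ * Gstar ^ 2 * (∑ t ∈ Finset.Icc 1 T, (d t : ℝ)) / σ ^ 2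
          + B xstar (x 1) / η := by
  intro u hu
  obtain ⟨z0, hz0⟩ := hXne
  have h1T : (1:ℕ) ∈ Finset.Icc 1 T := by simp [hT]
  have hG0 : 0 ≤ Gstar := le_trans (norm_nonneg _) (hG 1 h1T z0 hz0)
  have hR0 : 0 ≤ R := le_trans (norm_nonneg _) (hR z0 hz0)
  -- Bregman identities
  have htri : ∀ a b c : E, B a b - B a c - B c b
      = (fderiv ℝ ψ c - fderiv ℝ ψ b) (a - c) := by
    intro a b c
    simp only [hB, ContinuousLinearMap.sub_apply, map_sub]
    ring
  have hpair : ∀ a b : E, B a b + B b a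
      = (fderiv ℝ ψ a - fderiv ℝ ψ b) (a - b) := by
    intro a b
    simp only [hB, ContinuousLinearMap.sub_apply, map_sub]
    ring
  have hBpos : ∀ a ∈ X, ∀ b ∈ X, 0 ≤ B a b := by
    intro a ha b hb
    refine le_trans ?_ (hψsc a ha b hb)
    positivity
  have hxmem : ∀ k, 1 ≤ k → k ≤ T + 1 → x k ∈ X := by
    intro k h1 h2
    obtain rfl | hk2 : k = 1 ∨ 2 ≤ k := by omega
    · exact hx1
    · obtain ⟨j, rfl⟩ : ∃ j, k = j + 1 := ⟨k - 1, by omega⟩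
      have hj : j ∈ Finset.Icc 1 T := by simp only [Finset.mem_Icc]; omega
      rw [hxnext j hj]; exact hxxmem j hj _ le_rfl
  -- the key per-round inequality
  have hperk : ∀ k ∈ Finset.Icc 1 T,
      η * (fderiv ℝ (f k) (x k)) (x k - u) ≤
        B u (xx (k + d k - 1) ((F (k + d k - 1)).filter (fun s => s < k)).card)
        - B u (xx (k + d k - 1) (((F (k + d k - 1)).filter (fun s => s < k)).card + 1))
        + η * Gstar * ‖x k - xx (k + d k - 1)
            (((F (k + d k - 1)).filter (fun s => s < k)).card + 1)‖
        + η ^ 3 * Gstar / σ + 2 * R * ξ * Gstar * η ^ 2 / σ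
      ∧ ‖xx (k + d k - 1) (((F (k + d k - 1)).filter (fun s => s < k)).card + 1)
          - xx (k + d k - 1) ((F (k + d k - 1)).filter (fun s => s < k)).card‖
          ≤ (η * Gstar + η ^ 2) / σ := by
    intro k hk
    obtain ⟨hk1, hkT⟩ := Finset.mem_Icc.mp hk
    obtain ⟨hdk1, hdkT⟩ := hd k hk
    set t : ℕ := k + d k - 1 with ht
    have htmem : t ∈ Finset.Icc 1 T := Finset.mem_Icc.mpr ⟨by omega, hdkT⟩
    have hkF : k ∈ F t := by
      rw [hF]; exact Finset.mem_filter.mpr ⟨hk, rfl⟩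
    set i : ℕ := ((F t).filter (fun s => s < k)).card with hi
    have hicard : i < (F t).card := idx_lt_card (F t) hkF
    set w : E := xx t i with hw
    set y : E := xx t (i + 1) with hy
    have hwX : w ∈ X := hxxmem t htmem i hicard.le
    have hyX : y ∈ X := hxxmem t htmem (i + 1) hicard
    obtain ⟨p, hpX, hpmin, happ⟩ := hopt t htmem k hkF
    set g : E →L[ℝ] ℝ := fderiv ℝ (f k) (x k) with hg
    have hxkX : x k ∈ X := hxmem k hk1 (by omega)
    have hgb : ‖g‖ ≤ Gstar := hG k hk (x k) hxkX
    have hAe : ∀ z, A t k z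
        = g z + (ψ z - ψ w - (fderiv ℝ ψ w) (z - w)) / η := by
      intro z; rw [hA t k z, hB]
    -- first-order optimality at p
    have hfo : ∀ v ∈ X, 0 ≤ η * g (v - p)
        + (fderiv ℝ ψ p - fderiv ℝ ψ w) (v - p) := by
      intro v hv
      have hL : HasFDerivAt (A t k)
          (g + η⁻¹ • (fderiv ℝ ψ p - fderiv ℝ ψ w)) p := by
        have heq : A t k
            = fun z => g z + (ψ z - ψ w - (fderiv ℝ ψ w) (z - w)) / η :=
          funext hAe
        rw [heq]
        have hlin : HasFDerivAt (fun z => (fderiv ℝ ψ w) (z - w))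
            (fderiv ℝ ψ w) p := by
          have h0 := ((fderiv ℝ ψ w).hasFDerivAt (x := p)).sub_const
            ((fderiv ℝ ψ w) w)
          simpa [map_sub] using h0
        have h1 : HasFDerivAt
            (fun z => ψ z - ψ w - (fderiv ℝ ψ w) (z - w))
            (fderiv ℝ ψ p - fderiv ℝ ψ w) p :=
          (((hψdiff p).hasFDerivAt).sub_const (ψ w)).sub hlin
        have heq2 : (fun z => g z + (ψ z - ψ w - (fderiv ℝ ψ w) (z - w)) / η)
            = fun z => g z + η⁻¹ • (ψ z - ψ w - (fderiv ℝ ψ w) (z - w)) := by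
          funext z; rw [smul_eq_mul, div_eq_inv_mul]
        rw [heq2]
        exact (g.hasFDerivAt (x := p)).add (h1.const_smul η⁻¹)
      have h0 := fo_min hX hpmin hpX hv hL
      simp only [ContinuousLinearMap.add_apply, ContinuousLinearMap.smul_apply,
        smul_eq_mul] at h0
      have h3 : 0 ≤ η * (g (v - p)
          + η⁻¹ * (fderiv ℝ ψ p - fderiv ℝ ψ w) (v - p)) :=
        mul_nonneg hη.le h0
      rw [mul_add, mul_inv_cancel_left₀ hη.ne'] at h3
      exact h3
    -- step bound 1 : ‖w - p‖ ≤ η Gstar / σ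
    have hstep1 : ‖w - p‖ ≤ η * Gstar / σ := by
      have h4 := hfo w hwX
      have h5 : (fderiv ℝ ψ p - fderiv ℝ ψ w) (w - p) = -(B p w + B w p) := by
        rw [hpair p w, ← map_neg]
        congr 1; abel
      have h7 := hψsc p hpX w hwX
      have h8 := hψsc w hwX p hpX
      have h9 : ‖p - w‖ = ‖w - p‖ := norm_sub_rev p w
      have h10 : g (w - p) ≤ Gstar * ‖w - p‖ := (clm_bound g (w - p) hgb).1
      rcases eq_or_lt_of_le (norm_nonneg (w - p)) with h0 | h0
      · rw [← h0]; positivity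
      · rw [le_div_iff₀ hσ]
        rw [h9] at h7
        rw [h5] at h4
        have h10' := mul_le_mul_of_nonneg_left h10 hη.le
        have h11 : (‖w - p‖ * σ) * ‖w - p‖ ≤ (η * Gstar) * ‖w - p‖ := by
          nlinarith [h4, h7, h8, h10']
        exact le_of_mul_le_mul_right h11 h0
    -- step bound 2 : ‖y - p‖ ≤ η² / σ
    have hstep2 : ‖y - p‖ ≤ η ^ 2 / σ := by
      have hexp : A t k y - A t k p
          = (η * g (y - p) + (fderiv ℝ ψ p - fderiv ℝ ψ w) (y - p) + B y p) / η := by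
        rw [hAe y, hAe p, hB y p]
        simp only [ContinuousLinearMap.sub_apply, map_sub]
        field_simp
        ring
      have hfo2 := hfo y hyX
      have hlow : B y p / η ≤ A t k y - A t k p := by
        rw [hexp]
        gcongr
        linarith
      have happ' : A t k y - A t k p ≤ η ^ 3 / (2 * σ) := by
        have hm := hpmin hxkX
        have : A t k y ≤ A t k p + η ^ 3 / (2 * σ) := happ
        linarith
      have hByp : B y p ≤ η ^ 4 / (2 * σ) := by
        have h12 : B y p / η ≤ η ^ 3 / (2 * σ) := le_trans hlow happ'
        rw [div_le_iff₀ hη] at h12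
        calc B y p ≤ η ^ 3 / (2 * σ) * η := h12
          _ = η ^ 4 / (2 * σ) := by ring
      have hsq : ‖y - p‖ ^ 2 ≤ (η ^ 2 / σ) ^ 2 := by
        have hsc : σ / 2 * ‖y - p‖ ^ 2 ≤ B y p := hψsc y hyX p hpX
        have hc : σ / 2 * ‖y - p‖ ^ 2 ≤ η ^ 4 / (2 * σ) := le_trans hsc hByp
        rw [le_div_iff₀ (by positivity : (0:ℝ) < 2 * σ)] at hc
        rw [div_pow, le_div_iff₀ (by positivity : (0:ℝ) < σ ^ 2)]
        nlinarith
      have h0p : (0:ℝ) ≤ η ^ 2 / σ := by positivity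
      nlinarith [norm_nonneg (y - p), hsq, h0p]
    refine ⟨?_, ?_⟩
    · -- main per-round inequality
      have hA1 := hfo u hu
      have htri1 := htri u w p
      have htri2 := htri u p y
      have hBpw := hBpos p hpX w hwX
      have hByp2 := hBpos y hyX p hpX
      have hlip := hψlip y hyX p hpX
      have hn2R : ‖u - y‖ ≤ 2 * R := by
        have h1 := hR u hu
        have h2 := hR y hyX
        have := norm_sub_le u y
        linarith
      have hbd : -((fderiv ℝ ψ y - fderiv ℝ ψ p) (u - y))
          ≤ ξ * Gstar * (η ^ 2 / σ) * (2 * R) := by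
        have h1 := (clm_bound (fderiv ℝ ψ y - fderiv ℝ ψ p) (u - y) hlip).2
        have hξG : 0 ≤ ξ * Gstar := mul_nonneg hξ.le hG0
        calc -((fderiv ℝ ψ y - fderiv ℝ ψ p) (u - y))
            ≤ ξ * Gstar * ‖y - p‖ * ‖u - y‖ := h1
          _ ≤ ξ * Gstar * (η ^ 2 / σ) * (2 * R) := by
              apply mul_le_mul (by nlinarith [norm_nonneg (y - p)]) hn2R
                (norm_nonneg _) (by positivity)
      have hgy : g (y - p) ≤ Gstar * ‖y - p‖ := (clm_bound g (y - p) hgb).1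
      have hgxky : g (x k - y) ≤ Gstar * ‖x k - y‖ := (clm_bound g (x k - y) hgb).1
      have hsplit : g (x k - u) = g (x k - y) + g (y - p) + g (p - u) := by
        simp only [map_sub]; ring
      have h13 : η * (g (p - u)) ≤ B u w - B u p - B p w := by
        have hneg : g (p - u) = -(g (u - p)) := by rw [← map_neg]; congr 1; abel
        rw [← htri1] at hA1
        rw [hneg]
        linarith
      have h14 : -B u p ≤ -B u y + ξ * Gstar * (η ^ 2 / σ) * (2 * R) := by
        linarith [htri2, hByp2, hbd]
      have h15 : η * (g (y - p)) ≤ η * (Gstar * (η ^ 2 / σ)) := by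
        have h1 : g (y - p) ≤ Gstar * (η ^ 2 / σ) := by nlinarith [norm_nonneg (y - p)]
        exact mul_le_mul_of_nonneg_left h1 hη.le
      have h16 : η * (g (x k - y)) ≤ η * (Gstar * ‖x k - y‖) :=
        mul_le_mul_of_nonneg_left hgxky hη.le
      rw [hsplit]
      have hexpand : η * (g (x k - y) + g (y - p) + g (p - u))
          = η * (g (x k - y)) + η * (g (y - p)) + η * (g (p - u)) := by ring
      rw [hexpand]
      have hc1 : η * (Gstar * (η ^ 2 / σ)) = η ^ 3 * Gstar / σ := by ring
      have hc2 : ξ * Gstar * (η ^ 2 / σ) * (2 * R) = 2 * R * ξ * Gstar * η ^ 2 / σ := by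
        ring
      have hc3 : η * (Gstar * ‖x k - y‖) = η * Gstar * ‖x k - y‖ := by ring
      linarith
    · -- step size bound
      have hd1 : y - w = (y - p) + (p - w) := by abel
      have hd2 : ‖p - w‖ = ‖w - p‖ := norm_sub_rev p w
      have hd3 : (η * Gstar + η ^ 2) / σ = η * Gstar / σ + η ^ 2 / σ := by ring
      calc ‖y - w‖ = ‖(y - p) + (p - w)‖ := by rw [hd1]
        _ ≤ ‖y - p‖ + ‖p - w‖ := norm_add_le _ _
        _ ≤ (η * Gstar + η ^ 2) / σ := by rw [hd2, hd3]; linarith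
  -- step bound for arbitrary consecutive intermediate points
  have hstep_all : ∀ t ∈ Finset.Icc 1 T, ∀ i, i + 1 ≤ (F t).card →
      ‖xx t (i + 1) - xx t i‖ ≤ (η * Gstar + η ^ 2) / σ := by
    intro t htm i hi1
    obtain ⟨k, hkF, hik⟩ := idx_surj (F t) (by omega : i < (F t).card)
    have hkm := Finset.mem_filter.mp ((hF t) ▸ hkF)
    have hstep := (hperk k hkm.1).2
    rw [hkm.2] at hstep
    rw [hik] at hstep
    exact hstep
  -- distance along the trajectory within a round
  have hpath1 : ∀ t ∈ Finset.Icc 1 T, ∀ j, j ≤ (F t).card →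
      ‖xx t j - x t‖ ≤ (j : ℝ) * ((η * Gstar + η ^ 2) / σ) := by
    intro t htm j
    induction j with
    | zero => intro _; rw [hxx0 t htm]; simp
    | succ n ih =>
        intro hn
        have h1 := ih (by omega)
        have h2 := hstep_all t htm n hn
        have h3 : xx t (n + 1) - x t = (xx t (n + 1) - xx t n) + (xx t n - x t) := by
          abel
        calc ‖xx t (n + 1) - x t‖ ≤ ‖xx t (n + 1) - xx t n‖ + ‖xx t n - x t‖ := by
              rw [h3]; exact norm_add_le _ _
          _ ≤ ((n + 1 : ℕ) : ℝ) * ((η * Gstar + η ^ 2) / σ) := by push_cast; linarith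
  -- distance across rounds
  have hpath2 : ∀ m : ℕ, ∀ k : ℕ, 1 ≤ k → k + m ≤ T + 1 →
      ‖x (k + m) - x k‖ ≤ (∑ s ∈ Finset.Icc k (k + m - 1), ((F s).card : ℝ))
        * ((η * Gstar + η ^ 2) / σ) := by
    intro m
    induction m with
    | zero =>
        intro k h1 h2
        have he : Finset.Icc k (k + 0 - 1) = ∅ := Finset.Icc_eq_empty (by omega)
        rw [he]; simp
    | succ n ih =>
        intro k h1 h2
        have hkn : k + n ∈ Finset.Icc 1 T := by
          simp only [Finset.mem_Icc]; omega
        have hx' : x (k + n + 1) = xx (k + n) (F (k + n)).card := hxnext (k + n) hkn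
        have h3 : ‖x (k + n + 1) - x (k + n)‖
            ≤ ((F (k + n)).card : ℝ) * ((η * Gstar + η ^ 2) / σ) := by
          rw [hx']; exact hpath1 (k + n) hkn _ le_rfl
        have h4 := ih k h1 (by omega)
        have hsum : ∑ s ∈ Finset.Icc k (k + (n + 1) - 1), ((F s).card : ℝ)
            = (∑ s ∈ Finset.Icc k (k + n - 1), ((F s).card : ℝ))
              + ((F (k + n)).card : ℝ) := by
          have h5 : k + (n + 1) - 1 = (k + n - 1) + 1 := by omega
          have h6 : (k + n - 1) + 1 = k + n := by omega
          rw [h5, Finset.sum_Icc_succ_top (by omega : k ≤ (k + n - 1) + 1), h6]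
        have h7 : x (k + (n + 1)) - x k
            = (x (k + n + 1) - x (k + n)) + (x (k + n) - x k) := by
          have h8 : k + (n + 1) = k + n + 1 := by omega
          rw [h8]; abel
        calc ‖x (k + (n + 1)) - x k‖
            ≤ ‖x (k + n + 1) - x (k + n)‖ + ‖x (k + n) - x k‖ := by
              rw [h7]; exact norm_add_le _ _
          _ ≤ (∑ s ∈ Finset.Icc k (k + (n + 1) - 1), ((F s).card : ℝ))
              * ((η * Gstar + η ^ 2) / σ) := by
              rw [hsum]; nlinarith [h3, h4]
  -- per-round delay distance bound
  have hdelay : ∀ k ∈ Finset.Icc 1 T,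
      ‖x k - xx (k + d k - 1) (((F (k + d k - 1)).filter (fun s => s < k)).card + 1)‖
        ≤ (((∑ s ∈ Finset.Icc k (k + d k - 1 - 1), (F s).card)
            + ((F (k + d k - 1)).filter (fun s => s < k)).card + 1 : ℕ) : ℝ)
          * ((η * Gstar + η ^ 2) / σ) := by
    intro k hk
    obtain ⟨hk1, hkT⟩ := Finset.mem_Icc.mp hk
    obtain ⟨hdk1, hdkT⟩ := hd k hk
    have htmem : k + d k - 1 ∈ Finset.Icc 1 T := Finset.mem_Icc.mpr ⟨by omega, hdkT⟩
    have hkF : k ∈ F (k + d k - 1) := by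
      rw [hF]; exact Finset.mem_filter.mpr ⟨hk, rfl⟩
    have hicard : ((F (k + d k - 1)).filter (fun s => s < k)).card
        < (F (k + d k - 1)).card := idx_lt_card _ hkF
    have h1 : ‖x (k + d k - 1) - x k‖
        ≤ (∑ s ∈ Finset.Icc k (k + d k - 1 - 1), ((F s).card : ℝ))
          * ((η * Gstar + η ^ 2) / σ) := by
      have hm : k + d k - 1 = k + (d k - 1) := by omega
      have hp := hpath2 (d k - 1) k hk1 (by omega)
      rw [← hm] at hp
      exact hp
    have h2 : ‖xx (k + d k - 1) (((F (k + d k - 1)).filter (fun s => s < k)).card + 1)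
        - x (k + d k - 1)‖
        ≤ ((((F (k + d k - 1)).filter (fun s => s < k)).card : ℝ) + 1)
          * ((η * Gstar + η ^ 2) / σ) := by
      have hp := hpath1 (k + d k - 1) htmem
        (((F (k + d k - 1)).filter (fun s => s < k)).card + 1) hicard
      push_cast at hp
      exact hp
    have h3 : x k - xx (k + d k - 1) (((F (k + d k - 1)).filter (fun s => s < k)).card + 1)
        = -(xx (k + d k - 1) (((F (k + d k - 1)).filter (fun s => s < k)).card + 1)
            - x (k + d k - 1)) - (x (k + d k - 1) - x k) := by abel
    calc ‖x k - xx (k + d k - 1) (((F (k + d k - 1)).filter (fun s => s < k)).card + 1)‖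
        ≤ ‖xx (k + d k - 1) (((F (k + d k - 1)).filter (fun s => s < k)).card + 1)
            - x (k + d k - 1)‖ + ‖x (k + d k - 1) - x k‖ := by
          rw [h3]
          refine le_trans (norm_sub_le _ _) ?_
          rw [norm_neg]
      _ ≤ (((∑ s ∈ Finset.Icc k (k + d k - 1 - 1), (F s).card)
            + ((F (k + d k - 1)).filter (fun s => s < k)).card + 1 : ℕ) : ℝ)
          * ((η * Gstar + η ^ 2) / σ) := by
          push_cast
          nlinarith [h1, h2]
  -- the combinatorial counting bound
  have hcount : ∑ k ∈ Finset.Icc 1 T,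
      ((∑ s ∈ Finset.Icc k (k + d k - 1 - 1), (F s).card)
        + ((F (k + d k - 1)).filter (fun s => s < k)).card + 1)
      ≤ 2 * ∑ t ∈ Finset.Icc 1 T, d t := by
    have hNk : ∀ k ∈ Finset.Icc 1 T,
        (∑ s ∈ Finset.Icc k (k + d k - 1 - 1), (F s).card)
          + ((F (k + d k - 1)).filter (fun s => s < k)).card + 1
        ≤ (∑ k' ∈ Finset.Icc 1 T,
            if k' ≤ k ∧ k ≤ k' + d k' - 1 then 1 else 0) + d k := by
      intro k hk
      obtain ⟨hk1, hkT⟩ := Finset.mem_Icc.mp hk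
      obtain ⟨hdk1, hdkT⟩ := hd k hk
      have hBsum : ∑ s ∈ Finset.Icc k (k + d k - 1 - 1), (F s).card
          = ∑ k' ∈ Finset.Icc 1 T,
              (if k' + d k' - 1 ∈ Finset.Icc k (k + d k - 1 - 1) then 1 else 0) := by
        calc ∑ s ∈ Finset.Icc k (k + d k - 1 - 1), (F s).card
            = ∑ s ∈ Finset.Icc k (k + d k - 1 - 1),
                ((Finset.Icc 1 T).filter (fun k' => k' + d k' - 1 = s)).card :=
              Finset.sum_congr rfl (fun s _ => by rw [hF])
          _ = ((Finset.Icc 1 T).filter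
                (fun k' => k' + d k' - 1 ∈ Finset.Icc k (k + d k - 1 - 1))).card :=
              Finset.sum_card_fiberwise_eq_card_filter _ _ _
          _ = _ := Finset.card_filter _ _
      have hAle : ((F (k + d k - 1)).filter (fun s => s < k)).card + 1
          ≤ ∑ k' ∈ Finset.Icc 1 T,
              (if k' ≤ k ∧ k' + d k' - 1 = k + d k - 1 then 1 else 0) := by
        rw [← Finset.card_filter]
        have hins : insert k ((F (k + d k - 1)).filter (fun s => s < k))
            ⊆ (Finset.Icc 1 T).filter
                (fun k' => k' ≤ k ∧ k' + d k' - 1 = k + d k - 1) := by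
          intro a ha
          rcases Finset.mem_insert.mp ha with rfl | ha2
          · exact Finset.mem_filter.mpr ⟨hk, le_rfl, rfl⟩
          · obtain ⟨haF, halt⟩ := Finset.mem_filter.mp ha2
            obtain ⟨haI, hae⟩ := Finset.mem_filter.mp ((hF _) ▸ haF)
            exact Finset.mem_filter.mpr ⟨haI, le_of_lt halt, hae⟩
        have hcard := Finset.card_le_card hins
        rw [Finset.card_insert_of_notMem (by simp)] at hcard
        exact hcard
      have hpoint : ∀ k' ∈ Finset.Icc 1 T,
          (if k' + d k' - 1 ∈ Finset.Icc k (k + d k - 1 - 1) then 1 else 0)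
            + (if k' ≤ k ∧ k' + d k' - 1 = k + d k - 1 then 1 else 0)
          ≤ (if k' ≤ k ∧ k ≤ k' + d k' - 1 then 1 else 0)
            + (if k' ∈ Finset.Icc (k + 1) (k + d k - 1 - 1) then 1 else 0) := by
        intro k' hk'
        obtain ⟨hk'1, hk'T⟩ := Finset.mem_Icc.mp hk'
        obtain ⟨hdk'1, _⟩ := hd k' hk'
        simp only [Finset.mem_Icc]
        split_ifs <;> omega
      have hχ2 : ∑ k' ∈ Finset.Icc 1 T,
          (if k' ∈ Finset.Icc (k + 1) (k + d k - 1 - 1) then 1 else 0) ≤ d k - 1 := by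
        rw [← Finset.card_filter]
        have hsub : (Finset.Icc 1 T).filter
            (fun k' => k' ∈ Finset.Icc (k + 1) (k + d k - 1 - 1))
            ⊆ Finset.Icc (k + 1) (k + d k - 1 - 1) :=
          fun a ha => (Finset.mem_filter.mp ha).2
        have hcard := Finset.card_le_card hsub
        rw [Nat.card_Icc] at hcard
        omega
      have hsum2 := Finset.sum_le_sum hpoint
      rw [Finset.sum_add_distrib, Finset.sum_add_distrib] at hsum2
      omega
    calc ∑ k ∈ Finset.Icc 1 T,
        ((∑ s ∈ Finset.Icc k (k + d k - 1 - 1), (F s).card)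
          + ((F (k + d k - 1)).filter (fun s => s < k)).card + 1)
        ≤ ∑ k ∈ Finset.Icc 1 T,
            ((∑ k' ∈ Finset.Icc 1 T,
              if k' ≤ k ∧ k ≤ k' + d k' - 1 then 1 else 0) + d k) :=
          Finset.sum_le_sum hNk
      _ = (∑ k ∈ Finset.Icc 1 T, ∑ k' ∈ Finset.Icc 1 T,
            if k' ≤ k ∧ k ≤ k' + d k' - 1 then 1 else 0)
          + ∑ k ∈ Finset.Icc 1 T, d k := Finset.sum_add_distrib
      _ = (∑ k' ∈ Finset.Icc 1 T, ∑ k ∈ Finset.Icc 1 T,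
            if k' ≤ k ∧ k ≤ k' + d k' - 1 then 1 else 0)
          + ∑ k ∈ Finset.Icc 1 T, d k := by rw [Finset.sum_comm]
      _ ≤ (∑ k' ∈ Finset.Icc 1 T, d k') + ∑ k ∈ Finset.Icc 1 T, d k := by
          have hinner : ∀ k' ∈ Finset.Icc 1 T,
              (∑ k ∈ Finset.Icc 1 T, if k' ≤ k ∧ k ≤ k' + d k' - 1 then 1 else 0)
                ≤ d k' := by
            intro k' hk'
            obtain ⟨hk'1, hk'T⟩ := Finset.mem_Icc.mp hk'
            obtain ⟨hdk'1, _⟩ := hd k' hk'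
            rw [← Finset.card_filter]
            have hsub : (Finset.Icc 1 T).filter
                (fun k => k' ≤ k ∧ k ≤ k' + d k' - 1)
                ⊆ Finset.Icc k' (k' + d k' - 1) := by
              intro a ha
              exact Finset.mem_Icc.mpr (Finset.mem_filter.mp ha).2
            have hcard := Finset.card_le_card hsub
            rw [Nat.card_Icc] at hcard
            omega
          exact Nat.add_le_add_right (Finset.sum_le_sum hinner) _
      _ = 2 * ∑ t ∈ Finset.Icc 1 T, d t := by ring
  -- telescoping of the Bregman terms
  have htele : ∑ k ∈ Finset.Icc 1 T,
      (B u (xx (k + d k - 1) ((F (k + d k - 1)).filter (fun s => s < k)).card)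
        - B u (xx (k + d k - 1) (((F (k + d k - 1)).filter (fun s => s < k)).card + 1)))
      = B u (x 1) - B u (x (T + 1)) := by
    have hmaps : ∀ k ∈ Finset.Icc 1 T, k + d k - 1 ∈ Finset.Icc 1 T := by
      intro k hk
      obtain ⟨h1, h2⟩ := Finset.mem_Icc.mp hk
      obtain ⟨h3, h4⟩ := hd k hk
      exact Finset.mem_Icc.mpr ⟨by omega, h4⟩
    rw [← Finset.sum_fiberwise_of_maps_to hmaps]
    have hout : ∀ tt ∈ Finset.Icc 1 T,
        (∑ k ∈ (Finset.Icc 1 T).filter (fun k => k + d k - 1 = tt),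
          (B u (xx (k + d k - 1) ((F (k + d k - 1)).filter (fun s => s < k)).card)
            - B u (xx (k + d k - 1)
                (((F (k + d k - 1)).filter (fun s => s < k)).card + 1))))
        = B u (x tt) - B u (x (tt + 1)) := by
      intro tt htt
      have hFtt : (Finset.Icc 1 T).filter (fun k => k + d k - 1 = tt) = F tt :=
        (hF tt).symm
      rw [hFtt]
      have hstep : ∀ k ∈ F tt,
          (B u (xx (k + d k - 1) ((F (k + d k - 1)).filter (fun s => s < k)).card)
            - B u (xx (k + d k - 1)
                (((F (k + d k - 1)).filter (fun s => s < k)).card + 1)))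
          = (B u (xx tt (((F tt).filter (fun s => s < k)).card))
              - B u (xx tt ((((F tt).filter (fun s => s < k)).card) + 1))) := by
        intro k hkf
        have hkf' := hkf
        rw [hF tt] at hkf'
        have heq : k + d k - 1 = tt := (Finset.mem_filter.mp hkf').2
        rw [heq]
      rw [Finset.sum_congr rfl hstep]
      have hbij : ∑ k ∈ F tt,
          (B u (xx tt (((F tt).filter (fun s => s < k)).card))
            - B u (xx tt ((((F tt).filter (fun s => s < k)).card) + 1)))
          = ∑ i ∈ Finset.range (F tt).card, (B u (xx tt i) - B u (xx tt (i + 1))) := by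
        refine Finset.sum_bij (fun k _ => ((F tt).filter (fun s => s < k)).card)
          ?_ ?_ ?_ ?_
        · intro a ha; exact Finset.mem_range.mpr (idx_lt_card (F tt) ha)
        · intro a ha b hb h; exact idx_inj (F tt) ha hb h
        · intro b hb
          obtain ⟨a, ha, hval⟩ := idx_surj (F tt) (Finset.mem_range.mp hb)
          exact ⟨a, ha, hval⟩
        · intro a ha; rfl
      rw [hbij, Finset.sum_range_sub' (fun i => B u (xx tt i)) (F tt).card]
      rw [hxx0 tt htt, hxnext tt htt]
    rw [Finset.sum_congr rfl hout]
    exact telescope_Icc (fun t => B u (x t)) T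
  -- regret bounded by linearization
  have hreg : ∑ k ∈ Finset.Icc 1 T, f k (x k) - ∑ k ∈ Finset.Icc 1 T, f k u
      ≤ ∑ k ∈ Finset.Icc 1 T, (fderiv ℝ (f k) (x k)) (x k - u) := by
    rw [← Finset.sum_sub_distrib]
    refine Finset.sum_le_sum ?_
    intro k hk
    obtain ⟨h1, h2⟩ := Finset.mem_Icc.mp hk
    exact fo_convex (hfconv k hk) (hxmem k h1 (by omega)) hu
      ((hfdiff k hk) (x k)).hasFDerivAt
  -- final assembly
  set DT : ℝ := ∑ t ∈ Finset.Icc 1 T, (d t : ℝ) with hDT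
  have hDT0 : 0 ≤ DT := by
    rw [hDT]; positivity
  have hS0 : 0 ≤ (η * Gstar + η ^ 2) / σ := by positivity
  have hsplit : ∑ k ∈ Finset.Icc 1 T,
      (B u (xx (k + d k - 1) ((F (k + d k - 1)).filter (fun s => s < k)).card)
        - B u (xx (k + d k - 1) (((F (k + d k - 1)).filter (fun s => s < k)).card + 1))
        + η * Gstar * ‖x k - xx (k + d k - 1)
            (((F (k + d k - 1)).filter (fun s => s < k)).card + 1)‖
        + η ^ 3 * Gstar / σ + 2 * R * ξ * Gstar * η ^ 2 / σ)
      = (∑ k ∈ Finset.Icc 1 T,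
          (B u (xx (k + d k - 1) ((F (k + d k - 1)).filter (fun s => s < k)).card)
            - B u (xx (k + d k - 1) (((F (k + d k - 1)).filter (fun s => s < k)).card + 1))))
        + η * Gstar * (∑ k ∈ Finset.Icc 1 T, ‖x k - xx (k + d k - 1)
            (((F (k + d k - 1)).filter (fun s => s < k)).card + 1)‖)
        + (T : ℝ) * (η ^ 3 * Gstar / σ + 2 * R * ξ * Gstar * η ^ 2 / σ) := by
    rw [Finset.sum_add_distrib, Finset.sum_add_distrib, Finset.sum_add_distrib,
      ← Finset.mul_sum, Finset.sum_const, Finset.sum_const, Nat.card_Icc,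
      Nat.add_sub_cancel, nsmul_eq_mul, nsmul_eq_mul]
    ring
  have hsum1 : ∑ k ∈ Finset.Icc 1 T, η * (fderiv ℝ (f k) (x k)) (x k - u)
      ≤ (B u (x 1) - B u (x (T + 1)))
        + η * Gstar * (∑ k ∈ Finset.Icc 1 T, ‖x k - xx (k + d k - 1)
            (((F (k + d k - 1)).filter (fun s => s < k)).card + 1)‖)
        + (T : ℝ) * (η ^ 3 * Gstar / σ + 2 * R * ξ * Gstar * η ^ 2 / σ) := by
    refine le_trans (Finset.sum_le_sum (fun k hk => (hperk k hk).1)) ?_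
    rw [hsplit, htele]
  have hxT1 : x (T + 1) ∈ X := hxmem (T + 1) (by omega) le_rfl
  have hBT0 : 0 ≤ B u (x (T + 1)) := hBpos u hu _ hxT1
  have hnormsum : ∑ k ∈ Finset.Icc 1 T, ‖x k - xx (k + d k - 1)
      (((F (k + d k - 1)).filter (fun s => s < k)).card + 1)‖
      ≤ 2 * DT * ((η * Gstar + η ^ 2) / σ) := by
    refine le_trans (Finset.sum_le_sum hdelay) ?_
    have h2 : ∑ k ∈ Finset.Icc 1 T,
        (((∑ s ∈ Finset.Icc k (k + d k - 1 - 1), (F s).card)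
            + ((F (k + d k - 1)).filter (fun s => s < k)).card + 1 : ℕ) : ℝ)
          * ((η * Gstar + η ^ 2) / σ)
        = ((∑ k ∈ Finset.Icc 1 T,
            ((∑ s ∈ Finset.Icc k (k + d k - 1 - 1), (F s).card)
              + ((F (k + d k - 1)).filter (fun s => s < k)).card + 1) : ℕ) : ℝ)
          * ((η * Gstar + η ^ 2) / σ) := by
      rw [← Finset.sum_mul]
      push_cast
      ring
    rw [h2]
    have h3 := (Nat.cast_le (α := ℝ)).mpr hcount
    have h4 : ((2 * ∑ t ∈ Finset.Icc 1 T, d t : ℕ) : ℝ) = 2 * DT := by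
      rw [hDT]; push_cast; ring
    have h5 := mul_le_mul_of_nonneg_right h3 hS0
    rw [h4] at h5
    exact h5
  have hQ : η * (∑ k ∈ Finset.Icc 1 T, (fderiv ℝ (f k) (x k)) (x k - u))
      ≤ B u (x 1) + η * Gstar * (2 * DT * ((η * Gstar + η ^ 2) / σ))
        + (T : ℝ) * (η ^ 3 * Gstar / σ + 2 * R * ξ * Gstar * η ^ 2 / σ) := by
    rw [Finset.mul_sum]
    refine le_trans hsum1 ?_
    have hηG : (0:ℝ) ≤ η * Gstar := by positivity
    have h6 := mul_le_mul_of_nonneg_left hnormsum hηG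
    linarith
  have htargetmul : B u (x 1) + η * Gstar * (2 * DT * ((η * Gstar + η ^ 2) / σ))
      + (T : ℝ) * (η ^ 3 * Gstar / σ + 2 * R * ξ * Gstar * η ^ 2 / σ)
      ≤ η * (η * (Gstar ^ 2 * (T : ℝ) + 8 * ξ * R * Gstar * (T : ℝ)
            + 2 * η * Gstar * (T : ℝ) + 4 * Gstar ^ 2 * DT + 8 * η * Gstar * DT) / (2 * σ)
          + 2 * η ^ 2 * ξ * Gstar ^ 2 * DT / σ ^ 2 + B u (x 1) / η) := by
    have hkey : η * (η * (Gstar ^ 2 * (T : ℝ) + 8 * ξ * R * Gstar * (T : ℝ)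
            + 2 * η * Gstar * (T : ℝ) + 4 * Gstar ^ 2 * DT + 8 * η * Gstar * DT) / (2 * σ)
          + 2 * η ^ 2 * ξ * Gstar ^ 2 * DT / σ ^ 2 + B u (x 1) / η)
        - (B u (x 1) + η * Gstar * (2 * DT * ((η * Gstar + η ^ 2) / σ))
          + (T : ℝ) * (η ^ 3 * Gstar / σ + 2 * R * ξ * Gstar * η ^ 2 / σ))
        = η ^ 2 * Gstar ^ 2 * (T : ℝ) / (2 * σ) + 2 * ξ * R * Gstar * η ^ 2 * (T : ℝ) / σ
          + 2 * η ^ 3 * Gstar * DT / σ + 2 * η ^ 3 * ξ * Gstar ^ 2 * DT / σ ^ 2 := by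
      field_simp
      ring
    have hn1 : 0 ≤ η ^ 2 * Gstar ^ 2 * (T : ℝ) / (2 * σ) := by positivity
    have hn2 : 0 ≤ 2 * ξ * R * Gstar * η ^ 2 * (T : ℝ) / σ := by positivity
    have hn3 : 0 ≤ 2 * η ^ 3 * Gstar * DT / σ := by positivity
    have hn4 : 0 ≤ 2 * η ^ 3 * ξ * Gstar ^ 2 * DT / σ ^ 2 := by positivity
    linarith
  have hfinal := le_trans hQ htargetmul
  have hQ2 := (mul_le_mul_iff_right₀ hη).mp hfinal
  exact le_trans hreg hQ2
end

section
/- (Theorem 6) Under the SDMD-RSC scheme with learning rates η_t = 1/(γt) and approximation error ρ_t = η_t³/(2σ), for every x* ∈ X the regret satisfies Reg_T := Σ_{t=1}^T f_t(x_t) − Σ_{t=1}^T f_t(x*) ≤ (3dG⋆² + 8ξRG⋆)(1 + ln T)/(2σγ) + 6dG⋆/(σγ²) + 2dξG⋆/(σ²γ²), where d := max_{1≤t≤T} d_t. -/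
open Finset

lemma aux_deriv_nonneg_of_min (φ : ℝ → ℝ) (L : ℝ) (h : HasDerivAt φ L 0)
    (hmin : ∀ s ∈ Set.Icc (0:ℝ) 1, φ 0 ≤ φ s) : 0 ≤ L := by
  have h1 : HasDerivWithinAt φ L (Set.Ioi 0) 0 := h.hasDerivWithinAt
  rw [hasDerivWithinAt_iff_tendsto_slope] at h1
  have he : Set.Ioi (0:ℝ) \ {0} = Set.Ioi 0 := Set.diff_singleton_eq_self (by simp)
  rw [he] at h1
  refine ge_of_tendsto h1 ?_
  filter_upwards [Ioo_mem_nhdsGT_of_mem (Set.mem_Ico.mpr ⟨le_refl (0:ℝ), zero_lt_one⟩)] with s hs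
  rw [slope_def_field]
  exact div_nonneg (by linarith [hmin s ⟨hs.1.le, hs.2.le⟩]) (by linarith [hs.1])

lemma aux_harmonic (T : ℕ) : ∑ k ∈ Icc 1 T, (1:ℝ)/k ≤ 1 + Real.log T := by
  have h := harmonic_le_one_add_log T
  rw [harmonic_eq_sum_Icc] at h
  calc ∑ k ∈ Icc 1 T, (1:ℝ)/k = ((∑ i ∈ Icc 1 T, ((i:ℚ))⁻¹ : ℚ) : ℝ) := by
        push_cast; simp [one_div]
    _ ≤ 1 + Real.log T := h

lemma aux_invsq (T : ℕ) : ∑ j ∈ Icc 1 T, (1:ℝ)/(j:ℝ)^2 ≤ 2 := by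
  have key : ∀ n : ℕ, 1 ≤ n → ∑ j ∈ Icc 1 n, (1:ℝ)/(j:ℝ)^2 ≤ 2 - 1/n := by
    intro n hn
    induction n with
    | zero => omega
    | succ m ih =>
      rcases Nat.eq_zero_or_pos m with hm | hm
      · subst hm; norm_num
      · rw [Finset.sum_Icc_succ_top (by omega : 1 ≤ m + 1)]
        have ihm := ih hm
        have hmR : (1:ℝ) ≤ (m:ℝ) := by exact_mod_cast hm
        have hstep : (1:ℝ)/((m:ℝ)+1)^2 ≤ 1/(m:ℝ) - 1/((m:ℝ)+1) := by
          rw [div_sub_div _ _ (by linarith) (by linarith)]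
          rw [div_le_div_iff₀ (by positivity) (by positivity)]
          ring_nf; nlinarith
        push_cast
        push_cast at ihm
        linarith
  rcases Nat.eq_zero_or_pos T with h | h
  · subst h; simp
  · linarith [key T h, one_div_pos.mpr (show (0:ℝ) < T by exact_mod_cast h)]

lemma aux_abel (φ : ℕ → ℝ) : ∀ n : ℕ, ∑ j ∈ Icc 1 n, (j:ℝ) * (φ j - φ (j+1))
    = ∑ j ∈ Icc 1 n, φ j - n * φ (n+1) := by
  intro n
  induction n with
  | zero => simp
  | succ m ih =>
    rw [Finset.sum_Icc_succ_top (by omega : 1 ≤ m + 1),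
        Finset.sum_Icc_succ_top (by omega : 1 ≤ m + 1), ih]
    push_cast; ring

lemma aux_norm_chain {E : Type*} [NormedAddCommGroup E] (x : ℕ → E) (a : ℕ) :
    ∀ b, a ≤ b → ‖x a - x b‖ ≤ ∑ j ∈ Ico a b, ‖x (j+1) - x j‖ := by
  intro b hb
  induction b, hb using Nat.le_induction with
  | base => simp
  | succ b hb ih =>
    rw [Finset.sum_Ico_succ_top hb]
    calc ‖x a - x (b+1)‖ ≤ ‖x a - x b‖ + ‖x b - x (b+1)‖ := by
          have := norm_sub_le_norm_sub_add_norm_sub (x a) (x b) (x (b+1)); linarith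
      _ ≤ (∑ j ∈ Ico a b, ‖x (j+1) - x j‖) + ‖x (b+1) - x b‖ := by
          rw [norm_sub_rev (x b)]; exact add_le_add ih le_rfl

set_option maxHeartbeats 8000000 in
/-- Theorem 6: SDMD-RSC regret bound. -/
theorem sdmd_rsc_regret
    {E : Type*} [NormedAddCommGroup E] [NormedSpace ℝ E]
    (X : Set E) (hXne : X.Nonempty) (hX : Convex ℝ X)
    (R : ℝ) (hR : ∀ z ∈ X, ‖z‖ ≤ R)
    (T : ℕ) (hT : 1 ≤ T) (d : ℕ → ℕ)
    (hd : ∀ t ∈ Finset.Icc 1 T, 1 ≤ d t ∧ t + d t - 1 ≤ T)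
    (F : ℕ → Finset ℕ)
    (hF : ∀ t, F t = (Finset.Icc 1 T).filter (fun k => k + d k - 1 = t))
    (f : ℕ → E → ℝ) (Gstar : ℝ)
    (hfdiff : ∀ t ∈ Finset.Icc 1 T, Differentiable ℝ (f t))
    (hG : ∀ t ∈ Finset.Icc 1 T, ∀ z ∈ X, ‖fderiv ℝ (f t) z‖ ≤ Gstar)
    (ψ : E → ℝ) (σ γ ξ : ℝ) (hσ : 0 < σ) (hγ : 0 < γ) (hξ : 0 < ξ)
    (hψdiff : Differentiable ℝ ψ)
    (B : E → E → ℝ)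
    (hB : ∀ a b, B a b = ψ a - ψ b - fderiv ℝ ψ b (a - b))
    (hψsc : ∀ a ∈ X, ∀ b ∈ X, B a b ≥ σ / 2 * ‖a - b‖ ^ 2)
    (hψlip : ∀ a ∈ X, ∀ b ∈ X,
      ‖fderiv ℝ ψ a - fderiv ℝ ψ b‖ ≤ ξ * Gstar * ‖a - b‖)
    (hrel : ∀ t ∈ Finset.Icc 1 T, ∀ a ∈ X, ∀ b ∈ X,
      f t a - f t b - fderiv ℝ (f t) b (a - b) ≥ γ * B a b)
    (x : ℕ → E) (hx1 : x 1 ∈ X)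
    (ην : ℕ → ℝ)
    (hην : ∀ t ∈ Finset.Icc 1 T, ην t = 1 / (γ * (t : ℝ)))
    (Bt : ℕ → E → ℝ)
    (hBt : ∀ t z, Bt t z =
      (∑ k ∈ F t, fderiv ℝ (f k) (x k) z) + B z (x t) / ην t)
    (hupd : ∀ t ∈ Finset.Icc 1 T, (F t).Nonempty →
      x (t + 1) ∈ X ∧ ∃ ystar ∈ X, IsMinOn (Bt t) X ystar ∧
        Bt t (x (t + 1)) ≤ Bt t ystar + (ην t) ^ 3 / (2 * σ))
    (hupd0 : ∀ t ∈ Finset.Icc 1 T, F t = ∅ → x (t + 1) = x t)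
    :
    ∀ xstar ∈ X,
      ∑ t ∈ Finset.Icc 1 T, f t (x t) - ∑ t ∈ Finset.Icc 1 T, f t xstar
        ≤ (3 * (((Finset.Icc 1 T).sup d : ℕ) : ℝ) * Gstar ^ 2 + 8 * ξ * R * Gstar)
              * (1 + Real.log T) / (2 * σ * γ)
          + 6 * (((Finset.Icc 1 T).sup d : ℕ) : ℝ) * Gstar / (σ * γ ^ 2)
          + 2 * (((Finset.Icc 1 T).sup d : ℕ) : ℝ) * ξ * Gstar / (σ ^ 2 * γ ^ 2) := by
  intro xstar hxstar
  obtain ⟨z₀, hz₀⟩ := hXne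
  set ddn : ℕ := (Finset.Icc 1 T).sup d with hddn
  set dR : ℝ := (ddn : ℝ) with hdR
  -- basic facts
  have h1T : (1:ℕ) ∈ Finset.Icc 1 T := Finset.mem_Icc.mpr ⟨le_rfl, hT⟩
  have hdd1 : 1 ≤ ddn := le_trans (hd 1 h1T).1 (Finset.le_sup h1T)
  have hdR1 : (1:ℝ) ≤ dR := by rw [hdR]; exact_mod_cast hdd1
  have hG0 : 0 ≤ Gstar := le_trans (norm_nonneg _) (hG 1 h1T z₀ hz₀)
  have hR0 : 0 ≤ R := le_trans (norm_nonneg _) (hR z₀ hz₀)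
  have hxX : ∀ t, 1 ≤ t → t ≤ T + 1 → x t ∈ X := by
    intro t
    induction t with
    | zero => omega
    | succ n ih =>
      intro h1 h2
      rcases Nat.eq_zero_or_pos n with hn | hn
      · subst hn; exact hx1
      · have hnI : n ∈ Finset.Icc 1 T := Finset.mem_Icc.mpr ⟨hn, by omega⟩
        rcases (F n).eq_empty_or_nonempty with he | hne
        · rw [hupd0 n hnI he]; exact ih (by omega) (by omega)
        · exact (hupd n hnI hne).1
  have hBnn : ∀ a ∈ X, ∀ b ∈ X, 0 ≤ B a b := by
    intro a ha b hb
    have := hψsc a ha b hb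
    nlinarith [sq_nonneg ‖a - b‖, norm_nonneg (a - b)]
  have hB0 : ∀ a, B a a = 0 := by
    intro a; rw [hB a a]; simp
  have hηget : ∀ j ∈ Finset.Icc 1 T, ην j = 1 / (γ * j) := hην
  have hηpos : ∀ j ∈ Finset.Icc 1 T, 0 < ην j := by
    intro j hj
    rw [hηget j hj]
    have : (1:ℝ) ≤ (j:ℝ) := by exact_mod_cast (Finset.mem_Icc.mp hj).1
    positivity
  have hcardF : ∀ j, (F j).card ≤ ddn := by
    intro j
    have hsub : F j ⊆ Finset.Icc (j + 1 - ddn) j := by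
      intro k hk
      rw [hF] at hk
      obtain ⟨hkI, hkd⟩ := Finset.mem_filter.mp hk
      have h1 := (hd k hkI).1
      have h2 : d k ≤ ddn := Finset.le_sup hkI
      simp only [Finset.mem_Icc]
      omega
    calc (F j).card ≤ (Finset.Icc (j + 1 - ddn) j).card := Finset.card_le_card hsub
      _ = j + 1 - (j + 1 - ddn) := Nat.card_Icc _ _
      _ ≤ ddn := by omega
  -- the per-round master inequality
  have main : ∀ j ∈ Finset.Icc 1 T,
      (∑ k ∈ F j, fderiv ℝ (f k) (x k)) (x j - xstar)
        ≤ ην j * (((F j).card : ℝ) * Gstar)^2/(2*σ)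
          + (γ * j) * (B xstar (x j) - B xstar (x (j+1)))
          + 2*R*ξ*Gstar * ην j / σ
      ∧ ‖x (j+1) - x j‖ ≤ (ην j * (((F j).card : ℝ) * Gstar) + (ην j)^2)/σ := by
    intro j hj
    obtain ⟨hj1, hjT⟩ := Finset.mem_Icc.mp hj
    have hjX : x j ∈ X := hxX j hj1 (by omega)
    have hη : 0 < ην j := hηpos j hj
    have hηv : ην j = 1 / (γ * j) := hηget j hj
    have hjR : (1:ℝ) ≤ (j:ℝ) := by exact_mod_cast hj1
    have hc : 0 < γ * (j:ℝ) := by positivity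
    have hηc : ην j * (γ * j) = 1 := by rw [hηv]; field_simp
    rcases (F j).eq_empty_or_nonempty with hFe | hFne
    · -- no feedback this round
      have hxx : x (j+1) = x j := hupd0 j hj hFe
      constructor
      · have hg0 : (∑ k ∈ F j, fderiv ℝ (f k) (x k)) = 0 := by rw [hFe]; simp
        rw [hg0, hxx]
        simp only [ContinuousLinearMap.zero_apply, sub_self, mul_zero, add_zero]
        have h1 : 0 ≤ ην j * (((F j).card:ℝ)*Gstar)^2/(2*σ) :=
          div_nonneg (mul_nonneg hη.le (sq_nonneg _)) (by linarith)
        have h2 : 0 ≤ 2*R*ξ*Gstar*ην j/σ :=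
          div_nonneg (mul_nonneg (mul_nonneg (mul_nonneg (by linarith : (0:ℝ) ≤ 2*R) hξ.le) hG0) hη.le) hσ.le
        linarith
      · rw [hxx, sub_self, norm_zero]
        have h1 : 0 ≤ ην j * (((F j).card:ℝ)*Gstar) :=
          mul_nonneg hη.le (mul_nonneg (by positivity) hG0)
        have h2 : 0 ≤ (ην j)^2 := sq_nonneg _
        exact div_nonneg (by linarith) hσ.le
    · -- feedback round
      obtain ⟨hxj1X, y, hyX, hmin, happ⟩ := hupd j hj hFne
      set g : E →L[ℝ] ℝ := ∑ k ∈ F j, fderiv ℝ (f k) (x k) with hg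
      have hBt2 : ∀ z, Bt j z = g z + B z (x j) * (γ * j) := by
        intro z
        rw [hBt j z, hηv, one_div, div_inv_eq_mul]
        congr 1
        rw [hg, ContinuousLinearMap.sum_apply]
      have hgb : ‖g‖ ≤ ((F j).card : ℝ) * Gstar := by
        calc ‖g‖ ≤ ∑ k ∈ F j, ‖fderiv ℝ (f k) (x k)‖ := norm_sum_le _ _
          _ ≤ ∑ k ∈ F j, Gstar := by
              refine Finset.sum_le_sum fun k hk => ?_
              have hkI : k ∈ Finset.Icc 1 T := by
                rw [hF] at hk; exact (Finset.mem_filter.mp hk).1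
              obtain ⟨hk1, hk2⟩ := Finset.mem_Icc.mp hkI
              exact hG k hkI (x k) (hxX k hk1 (by omega))
          _ = ((F j).card : ℝ) * Gstar := by rw [Finset.sum_const, nsmul_eq_mul]
      have hgnn : (0:ℝ) ≤ ‖g‖ := norm_nonneg _
      have habs : ∀ w : E, g w ≤ ‖g‖ * ‖w‖ := fun w =>
        (le_abs_self _).trans (by rw [← Real.norm_eq_abs]; exact g.le_opNorm w)
      -- the variational inequality
      have star : ∀ z ∈ X, B z y * (γ * j) ≤ Bt j z - Bt j y := by
        intro z hz
        have hexp : Bt j z - Bt j y =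
            (g (z - y) + (fderiv ℝ ψ y (z - y) - fderiv ℝ ψ (x j) (z - y)) * (γ * j))
              + B z y * (γ * j) := by
          rw [hBt2 z, hBt2 y, hB z (x j), hB y (x j), hB z y]
          have h1 : g (z - y) = g z - g y := map_sub g z y
          have h3 : fderiv ℝ ψ (x j) (z - x j) - fderiv ℝ ψ (x j) (y - x j)
              = fderiv ℝ ψ (x j) (z - y) := by
            rw [← map_sub]; congr 1; abel
          linear_combination (-(γ*(j:ℝ))) * h3 - h1
        have hL0 : 0 ≤ g (z - y) + (fderiv ℝ ψ y (z - y) - fderiv ℝ ψ (x j) (z - y)) * (γ * j) := by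
          set v := z - y with hv
          have hline : HasDerivAt (fun s : ℝ => y + s • v) v 0 := by
            simpa using ((hasDerivAt_id (0:ℝ)).smul_const v).const_add y
          have h2 : HasDerivAt (fun s : ℝ => ψ (y + s • v)) (fderiv ℝ ψ y v) 0 := by
            have hψy : HasFDerivAt ψ (fderiv ℝ ψ y) ((fun s : ℝ => y + s • v) 0) := by
              simpa using (hψdiff y).hasFDerivAt
            exact hψy.comp_hasDerivAt 0 hline
          have h3 : HasDerivAt (fun s : ℝ => fderiv ℝ ψ (x j) (y + s • v - x j))
              (fderiv ℝ ψ (x j) v) 0 := by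
            have hline2 : HasDerivAt (fun s : ℝ => y + s • v - x j) v 0 := hline.sub_const (x j)
            exact ((fderiv ℝ ψ (x j)).hasFDerivAt).comp_hasDerivAt 0 hline2
          have h1g : HasDerivAt (fun s : ℝ => g (y + s • v)) (g v) 0 :=
            (g.hasFDerivAt).comp_hasDerivAt 0 hline
          have hφd : HasDerivAt (fun s : ℝ => Bt j (y + s • v))
              (g v + (fderiv ℝ ψ y v - fderiv ℝ ψ (x j) v) * (γ * j)) 0 := by
            have hee : (fun s : ℝ => Bt j (y + s • v))
                = fun s : ℝ => g (y + s • v)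
                  + (ψ (y + s • v) - ψ (x j) - fderiv ℝ ψ (x j) (y + s • v - x j)) * (γ * j) := by
              funext s
              rw [hBt2, hB]
            rw [hee]
            exact h1g.add ((((h2.sub_const (ψ (x j))).sub h3)).mul_const (γ * (j:ℝ)))
          have hm : ∀ s ∈ Set.Icc (0:ℝ) 1,
              (fun s : ℝ => Bt j (y + s • v)) 0 ≤ (fun s : ℝ => Bt j (y + s • v)) s := by
            intro s hs
            have hmem : y + s • v ∈ X := by
              have h := hX hyX hz (by linarith [hs.2] : (0:ℝ) ≤ 1 - s) hs.1 (by ring)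
              have heq : (1 - s) • y + s • z = y + s • v := by
                rw [hv, smul_sub, sub_smul, one_smul]; abel
              rwa [heq] at h
            have h0 : y + (0:ℝ) • v = y := by simp
            simp only [h0]
            exact isMinOn_iff.mp hmin _ hmem
          exact aux_deriv_nonneg_of_min _ _ hφd hm
        linarith [hexp, hL0]
      -- expansion at x j
      have hBtxj : Bt j (x j) - Bt j y = g (x j - y) - B y (x j) * (γ * j) := by
        rw [hBt2, hBt2, hB0, map_sub]; ring
      -- strong convexity bounds
      have hB1 : σ/2 * ‖x j - y‖^2 ≤ B (x j) y := hψsc (x j) hjX y hyX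
      have hB2 : σ/2 * ‖x j - y‖^2 ≤ B y (x j) := by
        have h := hψsc y hyX (x j) hjX; rwa [norm_sub_rev] at h
      have hgw : g (x j - y) ≤ ‖g‖ * ‖x j - y‖ := habs _
      -- distance of x j to the exact minimizer
      have hkey : σ * ‖x j - y‖^2 * (γ * j) ≤ ‖g‖ * ‖x j - y‖ := by
        have s1 := star (x j) hjX
        have m1 := mul_le_mul_of_nonneg_right hB1 hc.le
        have m2 := mul_le_mul_of_nonneg_right hB2 hc.le
        nlinarith [s1, hBtxj, hgw, m1, m2]
      have hu0v : ‖x j - y‖ ≤ ην j * ‖g‖ / σ := by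
        rcases eq_or_lt_of_le (norm_nonneg (x j - y)) with h0 | h0
        · rw [← h0]; exact div_nonneg (mul_nonneg hη.le hgnn) hσ.le
        · rw [le_div_iff₀ hσ]
          have h5 : σ * ‖x j - y‖ * (γ * j) ≤ ‖g‖ := by
            rcases le_or_gt (σ * ‖x j - y‖ * (γ * j)) ‖g‖ with h | h
            · exact h
            · exfalso; nlinarith [hkey, h0]
          calc ‖x j - y‖ * σ = ην j * (σ * ‖x j - y‖ * (γ * j)) := by
                linear_combination (-(σ * ‖x j - y‖)) * hηc
            _ ≤ ην j * ‖g‖ := mul_le_mul_of_nonneg_left h5 hη.le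
      -- distance of x (j+1) to the exact minimizer
      have hu1v : ‖x (j+1) - y‖ ≤ (ην j)^2 / σ := by
        have s2 := star (x (j+1)) hxj1X
        have h6 : Bt j (x (j+1)) - Bt j y ≤ (ην j)^3/(2*σ) := by linarith [happ]
        have hB3 : σ/2 * ‖x (j+1) - y‖^2 ≤ B (x (j+1)) y := hψsc _ hxj1X _ hyX
        have h7 : σ/2 * ‖x (j+1) - y‖^2 * (γ * j) ≤ (ην j)^3/(2*σ) :=
          le_trans (le_trans (mul_le_mul_of_nonneg_right hB3 hc.le) s2) h6
        have h8 : ‖x (j+1) - y‖^2 ≤ ((ην j)^2/σ)^2 := by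
          have h7' : σ/2 * ‖x (j+1) - y‖^2 * (γ * j) * (2*σ) ≤ (ην j)^3 := by
            rw [le_div_iff₀ (by positivity : (0:ℝ) < 2*σ)] at h7
            exact h7
          have h7'' := mul_le_mul_of_nonneg_left h7' hη.le
          have hsub : ην j * (σ/2 * ‖x (j+1) - y‖^2 * (γ * j) * (2*σ))
              = ‖x (j+1) - y‖^2 * σ^2 := by
            linear_combination (‖x (j+1) - y‖^2 * σ^2) * hηc
          have h9 : ‖x (j+1) - y‖^2 * σ^2 ≤ (ην j)^4 := by nlinarith [h7'', hsub]
          have hexp2 : ((ην j)^2/σ)^2 = (ην j)^4/σ^2 := by ring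
          rw [hexp2, le_div_iff₀ (by positivity : (0:ℝ) < σ^2)]
          linarith
        have := Real.sqrt_le_sqrt h8
        rwa [Real.sqrt_sq (norm_nonneg _), Real.sqrt_sq (by positivity)] at this
      -- movement bound
      have hmove : ‖x (j+1) - x j‖ ≤ (ην j * (((F j).card : ℝ) * Gstar) + (ην j)^2)/σ := by
        have htri : ‖x (j+1) - x j‖ ≤ ‖x (j+1) - y‖ + ‖y - x j‖ :=
          norm_sub_le_norm_sub_add_norm_sub _ _ _
        have hyx : ‖y - x j‖ = ‖x j - y‖ := norm_sub_rev _ _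
        have hgb' : ην j * ‖g‖ / σ ≤ ην j * (((F j).card:ℝ)*Gstar)/σ := by gcongr
        rw [add_div]
        calc ‖x (j+1) - x j‖ ≤ ‖x (j+1) - y‖ + ‖x j - y‖ := by rw [← hyx]; exact htri
          _ ≤ (ην j)^2/σ + ην j * (((F j).card:ℝ)*Gstar)/σ := by
              have := le_trans hu0v hgb'
              linarith [hu1v]
          _ = ην j * (((F j).card:ℝ)*Gstar)/σ + (ην j)^2/σ := by ring
      refine ⟨?_, hmove⟩
      -- master inequality
      have hA1 : g (x j - xstar) = (Bt j (x j) - Bt j xstar) + B xstar (x j) * (γ * j) := by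
        rw [hBt2, hBt2, hB0, map_sub]; ring
      have hA2 : Bt j (x j) - Bt j y ≤ ην j * ‖g‖^2/(2*σ) := by
        rw [hBtxj, sub_le_iff_le_add]
        rw [div_add' _ _ _ (by positivity : (2*σ) ≠ 0)]
        rw [le_div_iff₀ (by positivity : (0:ℝ) < 2*σ)]
        have m2 := mul_le_mul_of_nonneg_right hB2 hc.le
        have m2' := mul_le_mul_of_nonneg_right m2 (by positivity : (0:ℝ) ≤ 2*σ)
        have hgw2 := mul_le_mul_of_nonneg_right hgw (by positivity : (0:ℝ) ≤ 2*σ)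
        have hsub : σ^2*‖x j - y‖^2*(γ*j)*ην j = σ^2*‖x j - y‖^2 := by
          linear_combination (σ^2*‖x j - y‖^2) * hηc
        nlinarith [sq_nonneg (ην j * ‖g‖ - σ * ‖x j - y‖), hη, hgw2, m2', hsub]
      have hA3 := star xstar hxstar
      have hA4 : B xstar (x (j+1)) - B xstar y ≤ 2*R*ξ*Gstar*‖x (j+1) - y‖ := by
        have hww : (x (j+1) - y) + (xstar - x (j+1)) = xstar - y := by abel
        have hmapadd : fderiv ℝ ψ y (x (j+1) - y) + fderiv ℝ ψ y (xstar - x (j+1))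
            = fderiv ℝ ψ y (xstar - y) := by rw [← map_add, hww]
        have hid : B xstar y - B xstar (x (j+1)) = B (x (j+1)) y
            + ((fderiv ℝ ψ (x (j+1)) - fderiv ℝ ψ y) (xstar - x (j+1))) := by
          rw [hB xstar y, hB xstar (x (j+1)), hB (x (j+1)) y]
          simp only [ContinuousLinearMap.sub_apply]
          linear_combination hmapadd
        have hBnn1 : 0 ≤ B (x (j+1)) y := hBnn _ hxj1X _ hyX
        have hlip := hψlip (x (j+1)) hxj1X y hyX
        have hw2R : ‖xstar - x (j+1)‖ ≤ 2*R := by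
          calc ‖xstar - x (j+1)‖ ≤ ‖xstar‖ + ‖x (j+1)‖ := norm_sub_le _ _
            _ ≤ R + R := add_le_add (hR _ hxstar) (hR _ hxj1X)
            _ = 2*R := by ring
        have habs2 : |(fderiv ℝ ψ (x (j+1)) - fderiv ℝ ψ y) (xstar - x (j+1))|
            ≤ (ξ*Gstar*‖x (j+1) - y‖) * (2*R) := by
          calc |(fderiv ℝ ψ (x (j+1)) - fderiv ℝ ψ y) (xstar - x (j+1))|
              ≤ ‖fderiv ℝ ψ (x (j+1)) - fderiv ℝ ψ y‖ * ‖xstar - x (j+1)‖ := by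
                rw [← Real.norm_eq_abs]; exact ContinuousLinearMap.le_opNorm _ _
            _ ≤ (ξ*Gstar*‖x (j+1) - y‖) * (2*R) := by
                apply mul_le_mul hlip hw2R (norm_nonneg _)
                exact mul_nonneg (mul_nonneg hξ.le hG0) (norm_nonneg _)
        have hna := neg_abs_le ((fderiv ℝ ψ (x (j+1)) - fderiv ℝ ψ y) (xstar - x (j+1)))
        nlinarith [hid, hBnn1, habs2, hna]
      have hgsq : ‖g‖^2 ≤ (((F j).card:ℝ)*Gstar)^2 := by nlinarith [hgb, hgnn]
      have hcu : (γ*(j:ℝ)) * ‖x (j+1) - y‖ ≤ ην j/σ := by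
        calc (γ*(j:ℝ))*‖x (j+1) - y‖ ≤ (γ*(j:ℝ))*((ην j)^2/σ) :=
              mul_le_mul_of_nonneg_left hu1v hc.le
          _ = (ην j/σ) * (ην j * (γ*(j:ℝ))) := by ring
          _ = ην j/σ := by rw [hηc, mul_one]
      have hterm1 : ην j*‖g‖^2/(2*σ) ≤ ην j*((((F j).card:ℝ)*Gstar))^2/(2*σ) := by gcongr
      have h2R : (0:ℝ) ≤ 2*R*ξ*Gstar :=
        mul_nonneg (mul_nonneg (by linarith) hξ.le) hG0
      have hterm3 : (γ*(j:ℝ))*(2*R*ξ*Gstar*‖x (j+1) - y‖) ≤ 2*R*ξ*Gstar*ην j/σ := by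
        calc (γ*(j:ℝ))*(2*R*ξ*Gstar*‖x (j+1) - y‖)
            = (2*R*ξ*Gstar)*((γ*(j:ℝ))*‖x (j+1) - y‖) := by ring
          _ ≤ (2*R*ξ*Gstar)*(ην j/σ) := mul_le_mul_of_nonneg_left hcu h2R
          _ = 2*R*ξ*Gstar*ην j/σ := by ring
      have hA4c := mul_le_mul_of_nonneg_left hA4 hc.le
      linarith [hA1, hA2, hA3, hA4c, hterm1, hterm3]
  -- ===================== summation stage =====================
  set N : ℝ := 1 + Real.log T with hNdef
  have hN1 : (1:ℝ) ≤ N := by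
    have : (0:ℝ) ≤ Real.log T := Real.log_nonneg (by exact_mod_cast hT)
    rw [hNdef]; linarith
  have hN0 : (0:ℝ) ≤ N := by linarith
  have hdR0 : (0:ℝ) ≤ dR := by linarith
  have hcf : ∀ jj, ((F jj).card : ℝ) ≤ dR := fun jj => by
    rw [hdR]; exact_mod_cast hcardF jj
  have hmapsto : ∀ k ∈ Finset.Icc 1 T, k + d k - 1 ∈ Finset.Icc 1 T := by
    intro k hk
    obtain ⟨h1, h2⟩ := Finset.mem_Icc.mp hk
    have h3 := (hd k hk).1
    have h4 := (hd k hk).2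
    exact Finset.mem_Icc.mpr ⟨by omega, h4⟩
  -- regret ≤ linearized
  have hreg : ∀ t ∈ Finset.Icc 1 T, f t (x t) - f t xstar
      ≤ fderiv ℝ (f t) (x t) (x t - xstar) - γ * B xstar (x t) := by
    intro t ht
    obtain ⟨ht1, ht2⟩ := Finset.mem_Icc.mp ht
    have h := hrel t ht xstar hxstar (x t) (hxX t ht1 (by omega))
    have hneg : fderiv ℝ (f t) (x t) (xstar - x t)
        = - fderiv ℝ (f t) (x t) (x t - xstar) := by
      rw [show xstar - x t = -(x t - xstar) by abel, map_neg]
    rw [hneg] at h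
    linarith
  have hsplit : ∀ t ∈ Finset.Icc 1 T, fderiv ℝ (f t) (x t) (x t - xstar)
      = fderiv ℝ (f t) (x t) (x t - x (t + d t - 1))
        + fderiv ℝ (f t) (x t) (x (t + d t - 1) - xstar) := by
    intro t ht
    rw [← map_add]
    congr 1
    abel
  -- delay (movement) term
  have hS1 : ∀ t ∈ Finset.Icc 1 T, fderiv ℝ (f t) (x t) (x t - x (t + d t - 1))
      ≤ Gstar * ∑ jj ∈ Finset.Ico t (t + d t - 1), ‖x (jj+1) - x jj‖ := by
    intro t ht
    obtain ⟨ht1, ht2⟩ := Finset.mem_Icc.mp ht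
    have hle : t ≤ t + d t - 1 := by have := (hd t ht).1; omega
    have hchain := aux_norm_chain x t (t + d t - 1) hle
    have h1 : fderiv ℝ (f t) (x t) (x t - x (t + d t - 1))
        ≤ ‖fderiv ℝ (f t) (x t)‖ * ‖x t - x (t + d t - 1)‖ :=
      (le_abs_self _).trans (by rw [← Real.norm_eq_abs]; exact ContinuousLinearMap.le_opNorm _ _)
    have h2 : ‖fderiv ℝ (f t) (x t)‖ ≤ Gstar := hG t ht (x t) (hxX t ht1 (by omega))
    calc fderiv ℝ (f t) (x t) (x t - x (t + d t - 1))
        ≤ ‖fderiv ℝ (f t) (x t)‖ * ‖x t - x (t + d t - 1)‖ := h1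
      _ ≤ Gstar * ‖x t - x (t + d t - 1)‖ := mul_le_mul_of_nonneg_right h2 (norm_nonneg _)
      _ ≤ Gstar * ∑ jj ∈ Finset.Ico t (t + d t - 1), ‖x (jj+1) - x jj‖ :=
          mul_le_mul_of_nonneg_left hchain hG0
  have hswap : ∑ t ∈ Finset.Icc 1 T, ∑ jj ∈ Finset.Ico t (t + d t - 1), ‖x (jj+1) - x jj‖
      ≤ ∑ jj ∈ Finset.Icc 1 T, dR * ‖x (jj+1) - x jj‖ := by
    have h1 : ∀ t ∈ Finset.Icc 1 T, ∑ jj ∈ Finset.Ico t (t + d t - 1), ‖x (jj+1) - x jj‖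
        = ∑ jj ∈ Finset.Icc 1 T,
            if jj ∈ Finset.Ico t (t + d t - 1) then ‖x (jj+1) - x jj‖ else 0 := by
      intro t ht
      rw [Finset.sum_ite_mem]
      congr 1
      refine (Finset.inter_eq_right.mpr ?_).symm
      intro jj hjj
      obtain ⟨h3, h4⟩ := Finset.mem_Ico.mp hjj
      obtain ⟨ht1, ht2⟩ := Finset.mem_Icc.mp ht
      have := (hd t ht).2
      exact Finset.mem_Icc.mpr ⟨by omega, by omega⟩
    rw [Finset.sum_congr rfl h1, Finset.sum_comm]
    refine Finset.sum_le_sum fun jj hjj => ?_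
    rw [Finset.sum_ite, Finset.sum_const, Finset.sum_const_zero, add_zero, nsmul_eq_mul]
    have hcard : ((Finset.Icc 1 T).filter
        (fun t => jj ∈ Finset.Ico t (t + d t - 1))).card ≤ ddn := by
      have hsub2 : (Finset.Icc 1 T).filter (fun t => jj ∈ Finset.Ico t (t + d t - 1))
          ⊆ Finset.Icc (jj + 2 - ddn) jj := by
        intro t htf
        obtain ⟨htI, htP⟩ := Finset.mem_filter.mp htf
        obtain ⟨hp1, hp2⟩ := Finset.mem_Ico.mp htP
        have hdt1 := (hd t htI).1
        have hdt2 : d t ≤ ddn := Finset.le_sup htI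
        exact Finset.mem_Icc.mpr ⟨by omega, by omega⟩
      calc ((Finset.Icc 1 T).filter (fun t => jj ∈ Finset.Ico t (t + d t - 1))).card
          ≤ (Finset.Icc (jj + 2 - ddn) jj).card := Finset.card_le_card hsub2
        _ = jj + 1 - (jj + 2 - ddn) := Nat.card_Icc _ _
        _ ≤ ddn := by omega
    have hcardR : (((Finset.Icc 1 T).filter
        (fun t => jj ∈ Finset.Ico t (t + d t - 1))).card : ℝ) ≤ dR := by
      rw [hdR]; exact_mod_cast hcard
    exact mul_le_mul_of_nonneg_right hcardR (norm_nonneg _)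
  -- grouping the second term by feedback round
  have hcollect : ∑ jj ∈ Finset.Icc 1 T, (∑ k ∈ F jj, fderiv ℝ (f k) (x k)) (x jj - xstar)
      = ∑ t ∈ Finset.Icc 1 T, fderiv ℝ (f t) (x t) (x (t + d t - 1) - xstar) := by
    rw [← Finset.sum_fiberwise_of_maps_to hmapsto
      (fun k => fderiv ℝ (f k) (x k) (x (k + d k - 1) - xstar))]
    refine Finset.sum_congr rfl fun jj hjj => ?_
    rw [ContinuousLinearMap.sum_apply, hF jj]
    refine Finset.sum_congr rfl fun k hk => ?_
    have hkk : k + d k - 1 = jj := (Finset.mem_filter.mp hk).2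
    rw [hkk]
  -- stepsize sums
  have hSb : ∑ jj ∈ Finset.Icc 1 T, ην jj * ((F jj).card : ℝ) ≤ N/γ := by
    have hfib : ∑ jj ∈ Finset.Icc 1 T, ην jj * ((F jj).card : ℝ)
        = ∑ k ∈ Finset.Icc 1 T, ην (k + d k - 1) := by
      rw [← Finset.sum_fiberwise_of_maps_to hmapsto (fun k => ην (k + d k - 1))]
      refine Finset.sum_congr rfl fun jj hjj => ?_
      have hin : ∑ k ∈ Finset.Icc 1 T with k + d k - 1 = jj, ην (k + d k - 1)
          = ∑ k ∈ Finset.Icc 1 T with k + d k - 1 = jj, ην jj := by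
        refine Finset.sum_congr rfl fun k hk => ?_
        rw [(Finset.mem_filter.mp hk).2]
      rw [hin, Finset.sum_const, nsmul_eq_mul, ← hF jj, mul_comm]
    rw [hfib]
    have h1 : ∀ k ∈ Finset.Icc 1 T, ην (k + d k - 1) ≤ γ⁻¹ * (1/(k:ℝ)) := by
      intro k hk
      obtain ⟨hk1, hk2⟩ := Finset.mem_Icc.mp hk
      have hk1R : (1:ℝ) ≤ (k:ℝ) := by exact_mod_cast hk1
      rw [hηget _ (hmapsto k hk)]
      have heq : γ⁻¹ * (1/(k:ℝ)) = 1/(γ*(k:ℝ)) := by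
        rw [one_div, one_div, ← mul_inv]
      rw [heq]
      have hcast : (k:ℝ) ≤ ((k + d k - 1 : ℕ):ℝ) := by
        have : k ≤ k + d k - 1 := by have := (hd k hk).1; omega
        exact_mod_cast this
      apply one_div_le_one_div_of_le (by positivity)
      exact mul_le_mul_of_nonneg_left hcast hγ.le
    calc ∑ k ∈ Finset.Icc 1 T, ην (k + d k - 1)
        ≤ ∑ k ∈ Finset.Icc 1 T, γ⁻¹ * (1/(k:ℝ)) := Finset.sum_le_sum h1
      _ = γ⁻¹ * ∑ k ∈ Finset.Icc 1 T, (1/(k:ℝ)) := by rw [Finset.mul_sum]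
      _ ≤ γ⁻¹ * N := mul_le_mul_of_nonneg_left (aux_harmonic T) (by positivity)
      _ = N/γ := by ring
  have hSη : ∑ jj ∈ Finset.Icc 1 T, ην jj ≤ N/γ := by
    have h1 : ∀ jj ∈ Finset.Icc 1 T, ην jj ≤ γ⁻¹ * (1/(jj:ℝ)) := by
      intro jj hjj
      rw [hηget _ hjj]
      have heq : γ⁻¹ * (1/(jj:ℝ)) = 1/(γ*(jj:ℝ)) := by
        rw [one_div, one_div, ← mul_inv]
      rw [heq]
    calc ∑ jj ∈ Finset.Icc 1 T, ην jj
        ≤ ∑ jj ∈ Finset.Icc 1 T, γ⁻¹ * (1/(jj:ℝ)) := Finset.sum_le_sum h1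
      _ = γ⁻¹ * ∑ jj ∈ Finset.Icc 1 T, (1/(jj:ℝ)) := by rw [Finset.mul_sum]
      _ ≤ γ⁻¹ * N := mul_le_mul_of_nonneg_left (aux_harmonic T) (by positivity)
      _ = N/γ := by ring
  have hSq : ∑ jj ∈ Finset.Icc 1 T, (ην jj)^2 ≤ 2/γ^2 := by
    have h1 : ∀ jj ∈ Finset.Icc 1 T, (ην jj)^2 = (γ^2)⁻¹ * (1/(jj:ℝ)^2) := by
      intro jj hjj
      obtain ⟨h2, h3⟩ := Finset.mem_Icc.mp hjj
      have h4 : (0:ℝ) < (jj:ℝ) := by exact_mod_cast h2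
      rw [hηget _ hjj]
      field_simp
    calc ∑ jj ∈ Finset.Icc 1 T, (ην jj)^2
        = ∑ jj ∈ Finset.Icc 1 T, (γ^2)⁻¹ * (1/(jj:ℝ)^2) := Finset.sum_congr rfl h1
      _ = (γ^2)⁻¹ * ∑ jj ∈ Finset.Icc 1 T, (1/(jj:ℝ)^2) := by rw [Finset.mul_sum]
      _ ≤ (γ^2)⁻¹ * 2 := mul_le_mul_of_nonneg_left (aux_invsq T) (by positivity)
      _ = 2/γ^2 := by ring
  -- telescoping
  have htel : ∑ jj ∈ Finset.Icc 1 T, (γ*(jj:ℝ))*(B xstar (x jj) - B xstar (x (jj+1)))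
      ≤ γ * ∑ jj ∈ Finset.Icc 1 T, B xstar (x jj) := by
    have h1 : ∑ jj ∈ Finset.Icc 1 T, (γ*(jj:ℝ))*(B xstar (x jj) - B xstar (x (jj+1)))
        = γ * ∑ jj ∈ Finset.Icc 1 T, (jj:ℝ)*(B xstar (x jj) - B xstar (x (jj+1))) := by
      rw [Finset.mul_sum]
      exact Finset.sum_congr rfl fun jj _ => by ring
    rw [h1, aux_abel (fun jj => B xstar (x jj)) T]
    have hTB : 0 ≤ B xstar (x (T+1)) := hBnn _ hxstar _ (hxX (T+1) (by omega) (by omega))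
    have hT0 : (0:ℝ) ≤ (T:ℝ) := by positivity
    have h2 : 0 ≤ γ * ((T:ℝ) * B xstar (x (T+1))) := mul_nonneg hγ.le (mul_nonneg hT0 hTB)
    nlinarith [h2]
  -- assemble
  have hmain1 := fun jj (hjj : jj ∈ Finset.Icc 1 T) => (main jj hjj).1
  have hmain2 := fun jj (hjj : jj ∈ Finset.Icc 1 T) => (main jj hjj).2
  have step1 : ∑ t ∈ Finset.Icc 1 T, f t (x t) - ∑ t ∈ Finset.Icc 1 T, f t xstar
      ≤ ∑ t ∈ Finset.Icc 1 T, fderiv ℝ (f t) (x t) (x t - xstar)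
        - γ * ∑ t ∈ Finset.Icc 1 T, B xstar (x t) := by
    rw [← Finset.sum_sub_distrib, Finset.mul_sum, ← Finset.sum_sub_distrib]
    exact Finset.sum_le_sum hreg
  have step2 : ∑ t ∈ Finset.Icc 1 T, fderiv ℝ (f t) (x t) (x t - xstar)
      = ∑ t ∈ Finset.Icc 1 T, fderiv ℝ (f t) (x t) (x t - x (t + d t - 1))
        + ∑ t ∈ Finset.Icc 1 T, fderiv ℝ (f t) (x t) (x (t + d t - 1) - xstar) := by
    rw [← Finset.sum_add_distrib]
    exact Finset.sum_congr rfl hsplit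
  have hstepm : ∑ jj ∈ Finset.Icc 1 T, ‖x (jj+1) - x jj‖ ≤ (Gstar * (N/γ) + 2/γ^2)/σ := by
    calc ∑ jj ∈ Finset.Icc 1 T, ‖x (jj+1) - x jj‖
        ≤ ∑ jj ∈ Finset.Icc 1 T, (ην jj * (((F jj).card:ℝ) * Gstar) + (ην jj)^2)/σ :=
          Finset.sum_le_sum hmain2
      _ = ((∑ jj ∈ Finset.Icc 1 T, ην jj * ((F jj).card:ℝ)) * Gstar
            + ∑ jj ∈ Finset.Icc 1 T, (ην jj)^2)/σ := by
          rw [← Finset.sum_div]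
          congr 1
          have hre : ∀ jj ∈ Finset.Icc 1 T,
              ην jj * (((F jj).card:ℝ) * Gstar) + (ην jj)^2
                = (ην jj * ((F jj).card:ℝ)) * Gstar + (ην jj)^2 := fun jj _ => by ring
          rw [Finset.sum_congr rfl hre, Finset.sum_add_distrib, ← Finset.sum_mul]
      _ ≤ ((N/γ) * Gstar + 2/γ^2)/σ := by
          have hnum : (∑ jj ∈ Finset.Icc 1 T, ην jj * ((F jj).card:ℝ)) * Gstar
              + ∑ jj ∈ Finset.Icc 1 T, (ην jj)^2 ≤ (N/γ) * Gstar + 2/γ^2 :=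
            add_le_add (mul_le_mul_of_nonneg_right hSb hG0) hSq
          exact div_le_div_of_nonneg_right hnum hσ.le
      _ = (Gstar * (N/γ) + 2/γ^2)/σ := by ring
  have step3 : ∑ t ∈ Finset.Icc 1 T, fderiv ℝ (f t) (x t) (x t - x (t + d t - 1))
      ≤ Gstar * (dR * ((Gstar * (N/γ) + 2/γ^2)/σ)) := by
    calc ∑ t ∈ Finset.Icc 1 T, fderiv ℝ (f t) (x t) (x t - x (t + d t - 1))
        ≤ ∑ t ∈ Finset.Icc 1 T, Gstar * ∑ jj ∈ Finset.Ico t (t + d t - 1), ‖x (jj+1) - x jj‖ :=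
          Finset.sum_le_sum hS1
      _ = Gstar * ∑ t ∈ Finset.Icc 1 T, ∑ jj ∈ Finset.Ico t (t + d t - 1), ‖x (jj+1) - x jj‖ := by
          rw [Finset.mul_sum]
      _ ≤ Gstar * ∑ jj ∈ Finset.Icc 1 T, dR * ‖x (jj+1) - x jj‖ :=
          mul_le_mul_of_nonneg_left hswap hG0
      _ = Gstar * (dR * ∑ jj ∈ Finset.Icc 1 T, ‖x (jj+1) - x jj‖) := by
          rw [← Finset.mul_sum]
      _ ≤ Gstar * (dR * ((Gstar * (N/γ) + 2/γ^2)/σ)) := by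
          apply mul_le_mul_of_nonneg_left (mul_le_mul_of_nonneg_left hstepm hdR0) hG0
  have step4 : ∑ t ∈ Finset.Icc 1 T, fderiv ℝ (f t) (x t) (x (t + d t - 1) - xstar)
      ≤ dR * Gstar^2 * (N/γ)/(2*σ) + γ * ∑ jj ∈ Finset.Icc 1 T, B xstar (x jj)
        + 2*R*ξ*Gstar*(N/γ)/σ := by
    rw [← hcollect]
    have hsplit3 : ∑ jj ∈ Finset.Icc 1 T, (∑ k ∈ F jj, fderiv ℝ (f k) (x k)) (x jj - xstar)
        ≤ ∑ jj ∈ Finset.Icc 1 T, ην jj * (((F jj).card:ℝ)*Gstar)^2/(2*σ)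
          + ∑ jj ∈ Finset.Icc 1 T, (γ*(jj:ℝ))*(B xstar (x jj) - B xstar (x (jj+1)))
          + ∑ jj ∈ Finset.Icc 1 T, 2*R*ξ*Gstar*ην jj/σ := by
      rw [← Finset.sum_add_distrib, ← Finset.sum_add_distrib]
      exact Finset.sum_le_sum hmain1
    have t1 : ∑ jj ∈ Finset.Icc 1 T, ην jj * (((F jj).card:ℝ)*Gstar)^2/(2*σ)
        ≤ dR*Gstar^2*(N/γ)/(2*σ) := by
      have per : ∀ jj ∈ Finset.Icc 1 T, ην jj * (((F jj).card:ℝ)*Gstar)^2/(2*σ)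
          ≤ (ην jj * ((F jj).card:ℝ)) * (dR*Gstar^2)/(2*σ) := by
        intro jj hjj
        have hηj := (hηpos jj hjj).le
        have hcj : (0:ℝ) ≤ ((F jj).card:ℝ) := by positivity
        have hprod : 0 ≤ (ην jj * ((F jj).card:ℝ) * Gstar^2) * (dR - ((F jj).card:ℝ)) :=
          mul_nonneg (mul_nonneg (mul_nonneg hηj hcj) (sq_nonneg _))
            (sub_nonneg.mpr (hcf jj))
        have hnum : ην jj * (((F jj).card:ℝ)*Gstar)^2 ≤ (ην jj * ((F jj).card:ℝ)) * (dR*Gstar^2) := by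
          nlinarith [hprod]
        exact div_le_div_of_nonneg_right hnum (by positivity)
      calc ∑ jj ∈ Finset.Icc 1 T, ην jj * (((F jj).card:ℝ)*Gstar)^2/(2*σ)
          ≤ ∑ jj ∈ Finset.Icc 1 T, (ην jj * ((F jj).card:ℝ)) * (dR*Gstar^2)/(2*σ) :=
            Finset.sum_le_sum per
        _ = (∑ jj ∈ Finset.Icc 1 T, ην jj * ((F jj).card:ℝ)) * (dR*Gstar^2)/(2*σ) := by
            rw [← Finset.sum_div, ← Finset.sum_mul]
        _ ≤ (N/γ) * (dR*Gstar^2)/(2*σ) := by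
            exact div_le_div_of_nonneg_right
              (mul_le_mul_of_nonneg_right hSb (mul_nonneg hdR0 (sq_nonneg Gstar))) (by positivity)
        _ = dR*Gstar^2*(N/γ)/(2*σ) := by ring
    have t3 : ∑ jj ∈ Finset.Icc 1 T, 2*R*ξ*Gstar*ην jj/σ ≤ 2*R*ξ*Gstar*(N/γ)/σ := by
      have he : ∑ jj ∈ Finset.Icc 1 T, 2*R*ξ*Gstar*ην jj/σ
          = (2*R*ξ*Gstar/σ) * ∑ jj ∈ Finset.Icc 1 T, ην jj := by
        rw [Finset.mul_sum]; exact Finset.sum_congr rfl fun jj _ => by ring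
      rw [he]
      have h2Rs : (0:ℝ) ≤ 2*R*ξ*Gstar/σ :=
        div_nonneg (mul_nonneg (mul_nonneg (by linarith) hξ.le) hG0) hσ.le
      calc (2*R*ξ*Gstar/σ) * ∑ jj ∈ Finset.Icc 1 T, ην jj
          ≤ (2*R*ξ*Gstar/σ) * (N/γ) := mul_le_mul_of_nonneg_left hSη h2Rs
        _ = 2*R*ξ*Gstar*(N/γ)/σ := by ring
    linarith [hsplit3, t1, htel, t3]
  -- final arithmetic
  have hfin : Gstar * (dR * ((Gstar * (N/γ) + 2/γ^2)/σ)) + dR*Gstar^2*(N/γ)/(2*σ)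
      + 2*R*ξ*Gstar*(N/γ)/σ
      ≤ (3 * dR * Gstar ^ 2 + 8 * ξ * R * Gstar) * N / (2 * σ * γ)
        + 6 * dR * Gstar / (σ * γ ^ 2) + 2 * dR * ξ * Gstar / (σ ^ 2 * γ ^ 2) := by
    have hdiff : (3 * dR * Gstar ^ 2 + 8 * ξ * R * Gstar) * N / (2 * σ * γ)
        + 6 * dR * Gstar / (σ * γ ^ 2) + 2 * dR * ξ * Gstar / (σ ^ 2 * γ ^ 2)
        - (Gstar * (dR * ((Gstar * (N/γ) + 2/γ^2)/σ)) + dR*Gstar^2*(N/γ)/(2*σ)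
          + 2*R*ξ*Gstar*(N/γ)/σ)
        = 4*(ξ*R*Gstar*N)/(2*σ*γ) + 4*(dR*Gstar)/(σ*γ^2) + 2*(dR*ξ*Gstar)/(σ^2*γ^2) := by
      field_simp
      ring
    have hn1 : 0 ≤ 4*(ξ*R*Gstar*N)/(2*σ*γ) :=
      div_nonneg (mul_nonneg (by norm_num)
        (mul_nonneg (mul_nonneg (mul_nonneg hξ.le hR0) hG0) hN0)) (by positivity)
    have hn2 : 0 ≤ 4*(dR*Gstar)/(σ*γ^2) :=
      div_nonneg (mul_nonneg (by norm_num) (mul_nonneg hdR0 hG0)) (by positivity)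
    have hn3 : 0 ≤ 2*(dR*ξ*Gstar)/(σ^2*γ^2) :=
      div_nonneg (mul_nonneg (by norm_num) (mul_nonneg (mul_nonneg hdR0 hξ.le) hG0)) (by positivity)
    linarith [hdiff, hn1, hn2, hn3]
  linarith [step1, step2, step3, step4, hfin]
end
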